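/- arXiv:2409.12630 — 2 statements merged into one kernel-verified Lean document; each statement's English description precedes it below -/
import Mathlib

section
/- Let g be continuous and concave in ξ, and assume at least one x ∈ X is feasible for 2RO-C. Then the k-adaptability problem has the same optimal value as the two-stage robust problem (and the same optimal first-stage solutions) whenever k ≥ min{|Y|, (n_ξ+1)·Σ_{i=0}^{min{m,n_ξ}} C(η, i)} in the fixed-recourse case (B(ξ) constant in ξ), and whenever k ≥ min{|Y|, (n_ξ+1)·Σ_{i=0}^{n_ξ} C(η, i)} in the general (random recourse) case; in particular k ∈ O(η^{min{m,n_ξ}}·(n_ξ+1)) respectively k ∈ O(η^{n_ξ}·(n_ξ+1)) policies suffice. -/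
noncomputable section

/-- Worst-case value `sup_{ξ ∈ U} min_{y ∈ S} F(y, ξ)` with values in `ℝ ∪ {±∞}`. -/
def worstValE {Eξ Ey : Type*} (U : Set Eξ) (S : Set Ey)
    (F : Ey → Eξ → EReal) : EReal :=
  ⨆ ξ ∈ U, ⨅ y ∈ S, F y ξ

/-- The `k`-adaptability value for a fixed first stage. -/
def kValE {Eξ Ey : Type*} (U : Set Eξ) (S : Set Ey)
    (F : Ey → Eξ → EReal) (k : ℕ) : EReal :=
  ⨅ y ∈ {y : Fin k → Ey | ∀ i, y i ∈ S}, worstValE U (Set.range y) F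

variable {nx ny nξ m : ℕ}

/-- Feasibility of `(x,y)` under scenario `ξ` for the structured constraint system
`A(ξ)x + B(ξ)y ≥ h(ξ)` with `h(ξ) = h + Hξ`, `A(ξ) = A + Σᵢ Aⁱξᵢ`, `B(ξ) = B + Σᵢ Bⁱξᵢ`. -/
def FeasS (hv : Fin m → ℤ) (H : Matrix (Fin m) (Fin nξ) ℤ)
    (A0 : Matrix (Fin m) (Fin nx) ℤ) (Ai : Fin nξ → Matrix (Fin m) (Fin nx) ℤ)
    (B0 : Matrix (Fin m) (Fin ny) ℤ) (Bi : Fin nξ → Matrix (Fin m) (Fin ny) ℤ)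
    (x : Fin nx → ℝ) (y : Fin ny → ℝ) (ξ : Fin nξ → ℝ) : Prop :=
  ∀ l, (hv l : ℝ) + ∑ i, (H l i : ℝ) * ξ i ≤
    (∑ j, ((A0 l j : ℝ) + ∑ i, ξ i * (Ai i l j : ℝ)) * x j) +
    ∑ j, ((B0 l j : ℝ) + ∑ i, ξ i * (Bi i l j : ℝ)) * y j

open Classical in
/-- `f(x,y,ξ) = g(x,y,ξ)` if the constraints hold and `+∞` otherwise. -/
def fES (g : (Fin nx → ℝ) → (Fin ny → ℝ) → (Fin nξ → ℝ) → ℝ)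
    (hv : Fin m → ℤ) (H : Matrix (Fin m) (Fin nξ) ℤ)
    (A0 : Matrix (Fin m) (Fin nx) ℤ) (Ai : Fin nξ → Matrix (Fin m) (Fin nx) ℤ)
    (B0 : Matrix (Fin m) (Fin ny) ℤ) (Bi : Fin nξ → Matrix (Fin m) (Fin ny) ℤ)
    (x : Fin nx → ℝ) (y : Fin ny → ℝ) (ξ : Fin nξ → ℝ) : EReal :=
  if FeasS hv H A0 Ai B0 Bi x y ξ then ((g x y ξ : ℝ) : EReal) else ⊤

/-- `x` is feasible for the two-stage robust problem. -/
def Feasible2RO (hv : Fin m → ℤ) (H : Matrix (Fin m) (Fin nξ) ℤ)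
    (A0 : Matrix (Fin m) (Fin nx) ℤ) (Ai : Fin nξ → Matrix (Fin m) (Fin nx) ℤ)
    (B0 : Matrix (Fin m) (Fin ny) ℤ) (Bi : Fin nξ → Matrix (Fin m) (Fin ny) ℤ)
    (Yx : (Fin nx → ℝ) → Set (Fin ny → ℝ)) (U : Set (Fin nξ → ℝ))
    (x : Fin nx → ℝ) : Prop :=
  ∀ ξ ∈ U, ∃ y ∈ Yx x, FeasS hv H A0 Ai B0 Bi x y ξ

/-- Coefficient vector `a_l(x,y)` of `ξ` in row `l`. -/
def rowCoef (H : Matrix (Fin m) (Fin nξ) ℤ) (Ai : Fin nξ → Matrix (Fin m) (Fin nx) ℤ)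
    (Bi : Fin nξ → Matrix (Fin m) (Fin ny) ℤ)
    (x : Fin nx → ℝ) (y : Fin ny → ℝ) (l : Fin m) : Fin nξ → ℝ :=
  fun i => (∑ j, (Ai i l j : ℝ) * x j) + (∑ j, (Bi i l j : ℝ) * y j) - (H l i : ℝ)

/-- Right-hand side `h_l(x,y)` of row `l`. -/
def rowRhs (hv : Fin m → ℤ) (A0 : Matrix (Fin m) (Fin nx) ℤ)
    (B0 : Matrix (Fin m) (Fin ny) ℤ)
    (x : Fin nx → ℝ) (y : Fin ny → ℝ) (l : Fin m) : ℝ :=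
  (hv l : ℝ) - (∑ j, (A0 l j : ℝ) * x j) - ∑ j, (B0 l j : ℝ) * y j

/-- The set `H(x)` of hyperplanes with nonzero normal that intersect `U`. -/
def HypSet (hv : Fin m → ℤ) (H : Matrix (Fin m) (Fin nξ) ℤ)
    (A0 : Matrix (Fin m) (Fin nx) ℤ) (Ai : Fin nξ → Matrix (Fin m) (Fin nx) ℤ)
    (B0 : Matrix (Fin m) (Fin ny) ℤ) (Bi : Fin nξ → Matrix (Fin m) (Fin ny) ℤ)
    (Yx : (Fin nx → ℝ) → Set (Fin ny → ℝ)) (U : Set (Fin nξ → ℝ))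
    (x : Fin nx → ℝ) : Set (Set (Fin nξ → ℝ)) :=
  {P | ∃ y ∈ Yx x, ∃ l : Fin m, rowCoef H Ai Bi x y l ≠ 0 ∧
    P = {ξ | ∑ i, rowCoef H Ai Bi x y l i * ξ i = rowRhs hv A0 B0 x y l} ∧
    (P ∩ U).Nonempty}

end


noncomputable section
namespace Stmt11Aux

def affF {d : ℕ} (a : Fin d → ℝ) (b : ℝ) (ξ : Fin d → ℝ) : ℝ := (∑ i, a i * ξ i) - b

lemma affF_comb {d : ℕ} (a : Fin d → ℝ) (b : ℝ) (p q : Fin d → ℝ) (s t : ℝ) (hst : s + t = 1) :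
    affF a b (s • p + t • q) = s * affF a b p + t * affF a b q := by
  have h1 : ∀ (r : ℝ) (z : Fin d → ℝ), r * (∑ i, a i * z i) = ∑ i, a i * (r * z i) := by
    intro r z; rw [Finset.mul_sum]; exact Finset.sum_congr rfl fun i _ => by ring
  simp only [affF, Pi.add_apply, Pi.smul_apply, smul_eq_mul, mul_add, Finset.sum_add_distrib,
    ← h1]
  linear_combination b * hst

lemma affF_cont {d : ℕ} (a : Fin d → ℝ) (b : ℝ) : Continuous (affF a b) := by
  unfold affF
  exact (continuous_finset_sum _ fun i _ => (continuous_const.mul (continuous_apply i))).sub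
    continuous_const

/-- explicit root on a segment when signs differ -/
lemma affF_root {d : ℕ} (a : Fin d → ℝ) (b : ℝ) (p q : Fin d → ℝ)
    (hp : 0 < affF a b p) (hq : affF a b q < 0) :
    ∃ θ : ℝ, 0 ≤ 1 - θ ∧ 0 ≤ θ ∧ (1 - θ) + θ = 1 ∧ affF a b ((1 - θ) • p + θ • q) = 0 := by
  set fp := affF a b p
  set fq := affF a b q
  refine ⟨fp / (fp - fq), by rw [sub_nonneg]; rw [div_le_one (by linarith)]; linarith,
    div_nonneg hp.le (by linarith), by ring, ?_⟩
  have hne : fp - fq ≠ 0 := by simp only [fp, fq]; intro h; simp only [fp,fq] at hp hq; nlinarith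
  rw [affF_comb _ _ _ _ _ _ (by ring)]
  field_simp
  ring

lemma convex_lt_comb {r a b s t : ℝ} (hs : 0 ≤ s) (ht : 0 ≤ t) (hst : s + t = 1)
    (ha : r < a) (hb : r < b) : r < s * a + t * b := by
  rcases eq_or_lt_of_le hs with h | h
  · have ht1 : t = 1 := by linarith
    rw [← h, ht1]; simpa using hb
  · have hr : s * r + t * r = r := by rw [← add_mul, hst, one_mul]
    nlinarith [mul_nonneg ht (by linarith : (0:ℝ) ≤ b - r), mul_pos h (sub_pos.2 ha)]

lemma convex_pos_comb {a b s t : ℝ} (hs : 0 ≤ s) (ht : 0 ≤ t) (hst : s + t = 1)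
    (ha : 0 < a) (hb : 0 < b) : 0 < s * a + t * b :=
  convex_lt_comb hs ht hst ha hb

lemma convex_neg_comb {a b s t : ℝ} (hs : 0 ≤ s) (ht : 0 ≤ t) (hst : s + t = 1)
    (ha : a < 0) (hb : b < 0) : s * a + t * b < 0 := by
  have := convex_lt_comb (r := 0) hs ht hst (by linarith : (0:ℝ) < -a) (by linarith : (0:ℝ) < -b)
  nlinarith


lemma dense_avoid {d : ℕ} {U : Set (Fin d → ℝ)} (hU : Convex ℝ U)
    {ι : Type*} (T : Finset ι) (a : ι → Fin d → ℝ) (b : ι → ℝ)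
    (hex : ∀ j ∈ T, ∃ u ∈ U, affF (a j) (b j) u ≠ 0) :
    ∀ ξ ∈ U, ∀ ε : ℝ, 0 < ε →
      ∃ ξ' ∈ U, dist ξ' ξ < ε ∧ ∀ j ∈ T, affF (a j) (b j) ξ' ≠ 0 := by
  classical
  induction T using Finset.induction_on with
  | empty => intro ξ hξ ε hε; exact ⟨ξ, hξ, by simpa using hε, by simp⟩
  | @insert j0 T hj0 ih =>
    intro ξ hξ ε hε
    obtain ⟨u, hu, hdu, havoid⟩ :=
      ih (fun j hj => hex j (Finset.mem_insert_of_mem hj)) ξ hξ (ε/2) (by linarith)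
    obtain ⟨w, hw, hw0⟩ := hex j0 (Finset.mem_insert_self _ _)
    set L : ℝ → (Fin d → ℝ) := fun t => (1-t) • u + t • w with hL
    have hLval : ∀ j t, affF (a j) (b j) (L t) =
        affF (a j) (b j) u + t * (affF (a j) (b j) w - affF (a j) (b j) u) := by
      intro j t; rw [hL]; dsimp only; rw [affF_comb _ _ _ _ _ _ (by ring)]; ring
    set B : Finset ℝ := (insert j0 T).image (fun j =>
      - affF (a j) (b j) u / (affF (a j) (b j) w - affF (a j) (b j) u)) with hB
    set δ : ℝ := min 1 (ε / (2 * (dist w u + 1))) with hδ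
    have hδpos : 0 < δ := by
      apply lt_min one_pos
      apply div_pos (by linarith)
      have := dist_nonneg (x := w) (y := u); linarith
    have hne : ((Set.Ioo (0:ℝ) δ) \ (B : Set ℝ)).Nonempty :=
      ((Set.infinite_coe_iff.mp (Set.Ioo.infinite hδpos)).diff B.finite_toSet).nonempty
    obtain ⟨t, ⟨ht0, htδ⟩, htB⟩ := hne
    have htle1 : t ≤ 1 := le_of_lt (lt_of_lt_of_le htδ (min_le_left _ _))
    refine ⟨L t, hU hu hw (by linarith) ht0.le (by ring), ?_, ?_⟩
    · have h2 : (1-t) • u + t • w - u = t • (w - u) := by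
        rw [sub_smul, one_smul, smul_sub]; abel
      have h1 : dist (L t) u = t * dist w u := by
        rw [hL]; dsimp only
        rw [dist_eq_norm, h2, norm_smul, Real.norm_eq_abs, abs_of_pos ht0, dist_eq_norm]
      have hD1 : 0 < 2 * (dist w u + 1) := by
        have := dist_nonneg (x := w) (y := u); linarith
      have h3 : t * (2 * (dist w u + 1)) < ε :=
        (lt_div_iff₀ hD1).1 (lt_of_lt_of_le htδ (min_le_right _ _))
      have h4 : t * dist w u < ε / 2 := by nlinarith [dist_nonneg (x := w) (y := u)]
      calc dist (L t) ξ ≤ dist (L t) u + dist u ξ := dist_triangle _ _ _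
        _ = t * dist w u + dist u ξ := by rw [h1]
        _ < ε := by linarith
    · intro j hj hzero
      rw [hLval] at hzero
      by_cases hcj : affF (a j) (b j) u = 0
      · rcases Finset.mem_insert.1 hj with rfl | hjT
        · have hmul : t * (affF (a j) (b j) w - affF (a j) (b j) u) = 0 := by linarith
          rcases mul_eq_zero.1 hmul with h | h
          · exact absurd h ht0.ne'
          · rw [hcj, sub_zero] at h; exact hw0 h
        · exact havoid j hjT hcj
      · apply htB
        have hD : affF (a j) (b j) w - affF (a j) (b j) u ≠ 0 := by
          intro h; rw [h, mul_zero, add_zero] at hzero; exact hcj hzero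
        have ht : t = - affF (a j) (b j) u / (affF (a j) (b j) w - affF (a j) (b j) u) := by
          field_simp
          linarith
        rw [Finset.coe_image]
        exact ⟨j, by simpa using hj, ht.symm⟩

lemma exists_min_eReal {α : Type*} {S : Set α} (hfin : S.Finite) (hne : S.Nonempty)
    (f : α → EReal) : ∃ y ∈ S, f y ≤ ⨅ z ∈ S, f z := by
  obtain ⟨y, hy, hmin⟩ := Set.exists_min_image S f hfin hne
  exact ⟨y, hy, le_iInf₂ hmin⟩

lemma exists_enum {α : Type*} {S : Set α} (hfin : S.Finite) :
    ∃ ys : Fin S.ncard → α, (∀ i, ys i ∈ S) ∧ ∀ y ∈ S, ∃ i, ys i = y := by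
  haveI := hfin.fintype
  have hc : Fintype.card S = S.ncard := by
    rw [← Nat.card_eq_fintype_card, Nat.card_coe_set_eq]
  obtain e := Fintype.equivFinOfCardEq hc
  exact ⟨fun i => (e.symm i : α), fun i => (e.symm i).2, fun y hy => ⟨e ⟨y, hy⟩, by simp⟩⟩

lemma hdep_dim {d h : ℕ} (aa : Fin h → Fin d → ℝ) :
    ∀ s : Finset (Fin h), d < s.card → ∃ c : Fin h → ℝ,
      (∃ j ∈ s, c j ≠ 0) ∧ ∀ i, ∑ j ∈ s, c j * aa j i = 0 := by
  intro s hs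
  classical
  have hnli : ¬ LinearIndependent ℝ (fun j : ↥s => aa j) := by
    intro hli
    have h1 := hli.fintype_card_le_finrank
    rw [Fintype.card_coe] at h1
    have hfr : Module.finrank ℝ (Fin d → ℝ) = d := by simp
    rw [hfr] at h1
    omega
  obtain ⟨cf, hsum, j0, hj0⟩ := Fintype.not_linearIndependent_iff.1 hnli
  set c : Fin h → ℝ := fun j => if hj : j ∈ s then cf ⟨j, hj⟩ else 0 with hcdef
  have hcval : ∀ j : ↥s, c ↑j = cf j := fun j => by rw [hcdef]; simp [j.2]
  refine ⟨c, ⟨j0, j0.2, by rw [hcval j0]; exact hj0⟩, fun i => ?_⟩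
  have h2 := congrFun hsum i
  rw [Finset.sum_apply] at h2
  simp only [Pi.zero_apply] at h2
  have h3 : ∑ j : ↥s, c ↑j * aa (↑j) i = 0 := by
    rw [← h2]
    exact Finset.sum_congr rfl fun j _ => by rw [hcval j, Pi.smul_apply, smul_eq_mul]
  rw [← Finset.sum_coe_sort s (fun j => c j * aa j i)]
  exact h3

lemma hdep_classes {d h mm : ℕ} (aa : Fin h → Fin d → ℝ) (cls : Fin h → Fin mm)
    (hcls : ∀ j j', cls j = cls j' → aa j = aa j') :
    ∀ s : Finset (Fin h), mm < s.card → ∃ c : Fin h → ℝ,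
      (∃ j ∈ s, c j ≠ 0) ∧ ∀ i, ∑ j ∈ s, c j * aa j i = 0 := by
  intro s hs
  classical
  obtain ⟨j, hj, j', hj', hne, heq⟩ := Finset.exists_ne_map_eq_of_card_lt_of_maps_to
    (t := Finset.univ) (by simpa using hs) (fun a _ => Finset.mem_univ (cls a))
  refine ⟨fun i => if i = j then 1 else if i = j' then -1 else 0,
    ⟨j, hj, by simp⟩, fun i => ?_⟩
  have haa := hcls j j' heq
  have hz : ∀ x ∈ s, x ∉ ({j, j'} : Finset _) →
      (if x = j then (1:ℝ) else if x = j' then -1 else 0) * aa x i = 0 := by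
    intro x _ hx
    simp only [Finset.mem_insert, Finset.mem_singleton] at hx
    push_neg at hx
    simp [hx.1, hx.2]
  have hsub : ({j, j'} : Finset _) ⊆ s := by
    intro x hx
    simp only [Finset.mem_insert, Finset.mem_singleton] at hx
    rcases hx with rfl | rfl <;> assumption
  rw [← Finset.sum_subset hsub hz, Finset.sum_pair hne]
  rw [if_pos rfl, if_neg (Ne.symm hne), if_pos rfl, haa]
  ring


lemma worstValE_le_kValE {Eξ Ey : Type*} (U : Set Eξ) (S : Set Ey)
    (F : Ey → Eξ → EReal) (k : ℕ) :
    worstValE U S F ≤ kValE U S F k := by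
  rw [kValE]
  refine le_iInf₂ fun ys hys => ?_
  rw [worstValE, worstValE]
  refine iSup₂_le fun ξ hξ => ?_
  refine le_trans ?_ (le_iSup₂ (f := fun ξ _ => ⨅ y ∈ Set.range ys, F y ξ) ξ hξ)
  refine le_iInf₂ fun z hz => ?_
  obtain ⟨i, rfl⟩ := hz
  exact iInf₂_le (ys i) (hys i)

lemma kValE_eq_of_tuple {Eξ Ey : Type*} {U : Set Eξ} {S : Set Ey} {F : Ey → Eξ → EReal}
    {k c : ℕ} (hSne : S.Nonempty) (hck : c ≤ k) (ys : Fin c → Ey) (hmem : ∀ i, ys i ∈ S)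
    (hcov : ∀ ξ ∈ U, ∃ i, F (ys i) ξ ≤ worstValE U S F) :
    kValE U S F k = worstValE U S F := by
  refine le_antisymm ?_ (worstValE_le_kValE U S F k)
  classical
  obtain ⟨y0, hy0⟩ := hSne
  set ys' : Fin k → Ey := fun i => if h : (i : ℕ) < c then ys ⟨i, h⟩ else y0 with hys'
  have hmem' : ys' ∈ {y : Fin k → Ey | ∀ i, y i ∈ S} := by
    intro i; rw [hys']; dsimp only; split
    · exact hmem _
    · exact hy0
  rw [kValE]
  refine le_trans (iInf₂_le ys' hmem') ?_
  rw [worstValE]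
  refine iSup₂_le fun ξ hξ => ?_
  obtain ⟨i, hi⟩ := hcov ξ hξ
  have hlt : (i : ℕ) < k := lt_of_lt_of_le i.isLt hck
  have heq : ys' ⟨(i : ℕ), hlt⟩ = ys i := by rw [hys']; simp [i.isLt]
  refine le_trans (iInf₂_le (ys' ⟨(i : ℕ), hlt⟩) (Set.mem_range_self _)) ?_
  rw [heq]; exact hi

lemma inner_le_worstValE {Eξ Ey : Type*} {U : Set Eξ} (S : Set Ey)
    (F : Ey → Eξ → EReal) {ξ : Eξ} (hξ : ξ ∈ U) :
    (⨅ y ∈ S, F y ξ) ≤ worstValE U S F := by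
  rw [worstValE]
  exact le_iSup₂ (f := fun ξ _ => ⨅ y ∈ S, F y ξ) ξ hξ

lemma feasS_iff_rows {nx ny nξ m : ℕ} (hv : Fin m → ℤ) (H : Matrix (Fin m) (Fin nξ) ℤ)
    (A0 : Matrix (Fin m) (Fin nx) ℤ) (Ai : Fin nξ → Matrix (Fin m) (Fin nx) ℤ)
    (B0 : Matrix (Fin m) (Fin ny) ℤ) (Bi : Fin nξ → Matrix (Fin m) (Fin ny) ℤ)
    (x : Fin nx → ℝ) (y : Fin ny → ℝ) (ξ : Fin nξ → ℝ) :
    FeasS hv H A0 Ai B0 Bi x y ξ ↔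
      ∀ l, 0 ≤ affF (rowCoef H Ai Bi x y l) (rowRhs hv A0 B0 x y l) ξ := by
  unfold FeasS
  apply forall_congr'
  intro l
  have swapA : ∑ i, (∑ j, (Ai i l j : ℝ) * x j) * ξ i
      = ∑ j, (∑ i, ξ i * (Ai i l j : ℝ)) * x j := by
    simp only [Finset.sum_mul]
    rw [Finset.sum_comm]
    exact Finset.sum_congr rfl fun j _ => Finset.sum_congr rfl fun i _ => by ring
  have swapB : ∑ i, (∑ j, (Bi i l j : ℝ) * y j) * ξ i
      = ∑ j, (∑ i, ξ i * (Bi i l j : ℝ)) * y j := by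
    simp only [Finset.sum_mul]
    rw [Finset.sum_comm]
    exact Finset.sum_congr rfl fun j _ => Finset.sum_congr rfl fun i _ => by ring
  have key : affF (rowCoef H Ai Bi x y l) (rowRhs hv A0 B0 x y l) ξ
      = ((∑ j, ((A0 l j : ℝ) + ∑ i, ξ i * (Ai i l j : ℝ)) * x j)
          + ∑ j, ((B0 l j : ℝ) + ∑ i, ξ i * (Bi i l j : ℝ)) * y j)
        - ((hv l : ℝ) + ∑ i, (H l i : ℝ) * ξ i) := by
    simp only [affF, rowCoef, rowRhs, sub_mul, add_mul, Finset.sum_add_distrib,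
      Finset.sum_sub_distrib]
    rw [swapA, swapB]
    ring
  rw [key]
  constructor
  · intro hle
    linarith [hle]
  · intro hle
    linarith [hle]



lemma master {d mm : ℕ} {Ey : Type*} (t h : ℕ)
    (U : Set (Fin d → ℝ)) (hUconv : Convex ℝ U) (hUne : U.Nonempty)
    (S : Set Ey) (hSfin : S.Finite) (hSne : S.Nonempty)
    (G : Ey → (Fin d → ℝ) → ℝ)
    (hGcont : ∀ y ∈ S, Continuous (G y))
    (hGconc : ∀ y ∈ S, ConcaveOn ℝ U (G y))
    (ar : Ey → Fin mm → Fin d → ℝ) (br : Ey → Fin mm → ℝ)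
    (F : Ey → (Fin d → ℝ) → EReal)
    (hFt : ∀ y ξ, (∀ l, 0 ≤ affF (ar y l) (br y l) ξ) → F y ξ = ((G y ξ : ℝ) : EReal))
    (hFn : ∀ y ξ, ¬ (∀ l, 0 ≤ affF (ar y l) (br y l) ξ) → F y ξ = ⊤)
    (aa : Fin h → Fin d → ℝ) (bb : Fin h → ℝ)
    (hcover : ∀ y ∈ S, ∀ l : Fin mm, (∃ u ∈ U, affF (ar y l) (br y l) u = 0) → ar y l ≠ 0 →
      ∃ j : Fin h, ∀ ξ, (affF (ar y l) (br y l) ξ = 0 ↔ affF (aa j) (bb j) ξ = 0))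
    (hdep : ∀ s : Finset (Fin h), t < s.card → ∃ c : Fin h → ℝ,
      (∃ j ∈ s, c j ≠ 0) ∧ ∀ i, ∑ j ∈ s, c j * aa j i = 0)
    (hvt : worstValE U S F ≠ ⊤) :
    ∃ (c : ℕ) (ys : Fin c → Ey),
      c ≤ (d + 1) * (∑ i ∈ Finset.Iic t, h.choose i) ∧ (∀ i, ys i ∈ S) ∧
      ∀ ξ ∈ U, ∃ i, F (ys i) ξ ≤ worstValE U S F := by
  classical
  set v := worstValE U S F with hvdef
  have hFnotbot : ∀ y ξ, F y ξ ≠ ⊥ := by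
    intro y ξ
    by_cases hfeas : ∀ l, 0 ≤ affF (ar y l) (br y l) ξ
    · rw [hFt y ξ hfeas]; exact EReal.coe_ne_bot _
    · rw [hFn y ξ hfeas]; simp
  obtain ⟨ξ0, hξ0⟩ := hUne
  have hvbot : v ≠ ⊥ := by
    intro hbot
    obtain ⟨y0, hy0, hmin⟩ := exists_min_eReal hSfin hSne (fun y => F y ξ0)
    have h1 : (⨅ y ∈ S, F y ξ0) ≤ v := inner_le_worstValE S F hξ0
    have h2 : F y0 ξ0 ≤ ⊥ := le_trans hmin (hbot ▸ h1)
    exact hFnotbot y0 ξ0 (le_bot_iff.1 h2)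
  set r : ℝ := v.toReal with hr
  have hvr : v = (r : EReal) := (EReal.coe_toReal hvt hvbot).symm
  have hstep1 : ∀ ξ ∈ U, ∃ y ∈ S, (∀ l, 0 ≤ affF (ar y l) (br y l) ξ) ∧ G y ξ ≤ r := by
    intro ξ hξ
    obtain ⟨y, hy, hmin⟩ := exists_min_eReal hSfin hSne (fun y => F y ξ)
    have hle : F y ξ ≤ v := le_trans hmin (inner_le_worstValE S F hξ)
    by_cases hfeas : ∀ l, 0 ≤ affF (ar y l) (br y l) ξ
    · refine ⟨y, hy, hfeas, ?_⟩
      rw [hFt y ξ hfeas, hvr] at hle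
      exact_mod_cast hle
    · exfalso; rw [hFn y ξ hfeas] at hle; exact hvt (top_le_iff.1 hle)
  set J : Finset (Fin h) := Finset.univ.filter (fun j => ∃ u ∈ U, affF (aa j) (bb j) u ≠ 0)
    with hJdef
  set U' : Set (Fin d → ℝ) := {ξ ∈ U | ∀ j ∈ J, affF (aa j) (bb j) ξ ≠ 0} with hU'def
  set pat : (Fin d → ℝ) → Finset (Fin h) :=
    fun ξ => J.filter (fun j => 0 < affF (aa j) (bb j) ξ) with hpatdef
  have hU'subU : U' ⊆ U := fun z hz => hz.1
  have hdense : ∀ ξ ∈ U, ∀ ε : ℝ, 0 < ε → ∃ ξ' ∈ U', dist ξ' ξ < ε := by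
    intro ξ hξ ε hε
    obtain ⟨ξ', hξ', hd, hav⟩ := dense_avoid hUconv J aa bb
      (fun j hj => (Finset.mem_filter.1 hj).2) ξ hξ ε hε
    exact ⟨ξ', ⟨hξ', hav⟩, hd⟩
  -- Claim A : feasibility is determined by the sign pattern
  have hclaimA : ∀ y ∈ S, ∀ ξ ∈ U', ∀ ξ' ∈ U', pat ξ = pat ξ' →
      (∀ l, 0 ≤ affF (ar y l) (br y l) ξ) → (∀ l, 0 ≤ affF (ar y l) (br y l) ξ') := by
    intro y hy ξ hξ ξ' hξ' hpats hfeas l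
    by_contra hneg
    push_neg at hneg
    obtain ⟨hξU, hξav⟩ := hξ
    obtain ⟨hξ'U, hξ'av⟩ := hξ'
    by_cases hz : ∃ u ∈ U, affF (ar y l) (br y l) u = 0
    · by_cases ha : ar y l = 0
      · obtain ⟨u, hu, hu0⟩ := hz
        have hconst : affF (ar y l) (br y l) ξ' = affF (ar y l) (br y l) u := by
          rw [affF, affF, ha]; simp
        rw [hconst, hu0] at hneg; exact lt_irrefl _ hneg
      · obtain ⟨j, hjiff⟩ := hcover y hy l hz ha
        by_cases hjJ : j ∈ J
        · have hgξ : affF (aa j) (bb j) ξ ≠ 0 := hξav j hjJ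
          have hgξ' : affF (aa j) (bb j) ξ' ≠ 0 := hξ'av j hjJ
          have hRξ : 0 < affF (ar y l) (br y l) ξ := by
            rcases lt_or_eq_of_le (hfeas l) with hlt | heq
            · exact hlt
            · exact absurd ((hjiff ξ).1 heq.symm) hgξ
          obtain ⟨θ, hθ1, hθ2, hθs, hθz⟩ := affF_root (ar y l) (br y l) ξ ξ' hRξ hneg
          have hgz : affF (aa j) (bb j) ((1-θ) • ξ + θ • ξ') = 0 := (hjiff _).1 hθz
          have hcomb : affF (aa j) (bb j) ((1-θ) • ξ + θ • ξ')
              = (1-θ) * affF (aa j) (bb j) ξ + θ * affF (aa j) (bb j) ξ' :=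
            affF_comb _ _ _ _ _ _ hθs
          have hsame : (0 < affF (aa j) (bb j) ξ) ↔ (0 < affF (aa j) (bb j) ξ') := by
            have h1 : j ∈ pat ξ ↔ j ∈ pat ξ' := by rw [hpats]
            rw [hpatdef] at h1
            simpa [Finset.mem_filter, hjJ] using h1
          rcases lt_or_gt_of_ne hgξ with hneg1 | hpos1
          · have hneg2 : affF (aa j) (bb j) ξ' < 0 := by
              rcases lt_or_gt_of_ne hgξ' with hlt | hgt
              · exact hlt
              · exact absurd (hsame.2 hgt) (not_lt.2 hneg1.le)
            have hfin := convex_neg_comb hθ1 hθ2 hθs hneg1 hneg2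
            rw [← hcomb, hgz] at hfin; exact lt_irrefl _ hfin
          · have hpos2 : 0 < affF (aa j) (bb j) ξ' := hsame.1 hpos1
            have hfin := convex_pos_comb hθ1 hθ2 hθs hpos1 hpos2
            rw [← hcomb, hgz] at hfin; exact lt_irrefl _ hfin
        · have hall : ∀ u ∈ U, affF (aa j) (bb j) u = 0 := by
            intro u hu
            by_contra hne
            exact hjJ (Finset.mem_filter.2 ⟨Finset.mem_univ _, u, hu, hne⟩)
          have hz' := (hjiff ξ').2 (hall ξ' hξ'U)
          rw [hz'] at hneg
          exact lt_irrefl _ hneg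
    · push_neg at hz
      have hRξ : 0 < affF (ar y l) (br y l) ξ :=
        lt_of_le_of_ne (hfeas l) (Ne.symm (hz ξ hξU))
      obtain ⟨θ, hθ1, hθ2, hθs, hθz⟩ := affF_root (ar y l) (br y l) ξ ξ' hRξ hneg
      exact hz _ (hUconv hξU hξ'U hθ1 hθ2 hθs) hθz
  -- the family of realized sign patterns
  set 𝒜 : Finset (Finset (Fin h)) := Finset.univ.filter (fun s => ∃ ξ ∈ U', pat ξ = s)
    with h𝒜def
  have hshat : ∀ s : Finset (Fin h), 𝒜.Shatters s → s.card ≤ t := by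
    intro s hsh
    by_contra hgt
    push_neg at hgt
    obtain ⟨c, ⟨j0, hj0s, hj0⟩, hrel⟩ := hdep s hgt
    have hsJ : s ⊆ J := by
      obtain ⟨u, hu𝒜, hsu⟩ := hsh.exists_superset
      rw [h𝒜def] at hu𝒜
      obtain ⟨ξu, hξu, hpatu⟩ := (Finset.mem_filter.1 hu𝒜).2
      refine hsu.trans ?_
      rw [← hpatu, hpatdef]
      exact Finset.filter_subset _ _
    have hval : ∀ ξ : Fin d → ℝ,
        ∑ j ∈ s, c j * affF (aa j) (bb j) ξ = - ∑ j ∈ s, c j * bb j := by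
      intro ξ
      have he1 : ∑ j ∈ s, c j * affF (aa j) (bb j) ξ
          = ∑ j ∈ s, (c j * (∑ i, aa j i * ξ i) - c j * bb j) :=
        Finset.sum_congr rfl fun j _ => by rw [affF]; ring
      rw [he1, Finset.sum_sub_distrib]
      have h0 : ∑ j ∈ s, c j * (∑ i, aa j i * ξ i) = 0 := by
        calc ∑ j ∈ s, c j * (∑ i, aa j i * ξ i)
            = ∑ j ∈ s, ∑ i, c j * aa j i * ξ i := by
              refine Finset.sum_congr rfl fun j _ => ?_
              rw [Finset.mul_sum]
              exact Finset.sum_congr rfl fun i _ => by ring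
          _ = ∑ i, ∑ j ∈ s, c j * aa j i * ξ i := Finset.sum_comm
          _ = ∑ i : Fin d, (∑ j ∈ s, c j * aa j i) * ξ i :=
              Finset.sum_congr rfl fun i _ => (Finset.sum_mul _ _ _).symm
          _ = 0 := by simp [hrel]
      rw [h0]; ring
    have hreal : ∀ P ⊆ s, ∃ ξ ∈ U', s ∩ pat ξ = P := by
      intro P hP
      obtain ⟨u, hu𝒜, hsu⟩ := hsh hP
      rw [h𝒜def] at hu𝒜
      obtain ⟨ξu, hξu, hpatu⟩ := (Finset.mem_filter.1 hu𝒜).2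
      exact ⟨ξu, hξu, by rw [hpatu]; exact hsu⟩
    obtain ⟨ξp, hξp, hξppat⟩ := hreal (s.filter (fun j => 0 < c j)) (Finset.filter_subset _ _)
    obtain ⟨ξn, hξn, hξnpat⟩ := hreal (s.filter (fun j => c j < 0)) (Finset.filter_subset _ _)
    have hkeyp : ∀ j ∈ s, c j ≠ 0 → 0 < c j * affF (aa j) (bb j) ξp := by
      intro j hj hcj
      have hjJ : j ∈ J := hsJ hj
      have hgne : affF (aa j) (bb j) ξp ≠ 0 := hξp.2 j hjJ
      rcases lt_or_gt_of_ne hcj with hc | hc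
      · have hnotin : j ∉ pat ξp := by
          intro hin
          have hmem2 : j ∈ s ∩ pat ξp := Finset.mem_inter.2 ⟨hj, hin⟩
          rw [hξppat] at hmem2
          exact absurd (Finset.mem_filter.1 hmem2).2 (by linarith)
        have hgneg : affF (aa j) (bb j) ξp < 0 := by
          rcases lt_or_gt_of_ne hgne with hlt | hgt
          · exact hlt
          · exact absurd (Finset.mem_filter.2 ⟨hjJ, hgt⟩) (by rw [hpatdef] at hnotin; exact hnotin)
        exact mul_pos_of_neg_of_neg hc hgneg
      · have hin : j ∈ pat ξp := by
          have hmem2 : j ∈ s.filter (fun j => 0 < c j) := Finset.mem_filter.2 ⟨hj, hc⟩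
          rw [← hξppat] at hmem2
          exact (Finset.mem_inter.1 hmem2).2
        have hgpos : 0 < affF (aa j) (bb j) ξp := by
          rw [hpatdef] at hin; exact (Finset.mem_filter.1 hin).2
        exact mul_pos hc hgpos
    have hkeyn : ∀ j ∈ s, c j ≠ 0 → c j * affF (aa j) (bb j) ξn < 0 := by
      intro j hj hcj
      have hjJ : j ∈ J := hsJ hj
      have hgne : affF (aa j) (bb j) ξn ≠ 0 := hξn.2 j hjJ
      rcases lt_or_gt_of_ne hcj with hc | hc
      · have hin : j ∈ pat ξn := by
          have hmem2 : j ∈ s.filter (fun j => c j < 0) := Finset.mem_filter.2 ⟨hj, hc⟩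
          rw [← hξnpat] at hmem2
          exact (Finset.mem_inter.1 hmem2).2
        have hgpos : 0 < affF (aa j) (bb j) ξn := by
          rw [hpatdef] at hin; exact (Finset.mem_filter.1 hin).2
        exact mul_neg_of_neg_of_pos hc hgpos
      · have hnotin : j ∉ pat ξn := by
          intro hin
          have hmem2 : j ∈ s ∩ pat ξn := Finset.mem_inter.2 ⟨hj, hin⟩
          rw [hξnpat] at hmem2
          exact absurd (Finset.mem_filter.1 hmem2).2 (by linarith)
        have hgneg : affF (aa j) (bb j) ξn < 0 := by
          rcases lt_or_gt_of_ne hgne with hlt | hgt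
          · exact hlt
          · exact absurd (Finset.mem_filter.2 ⟨hjJ, hgt⟩) (by rw [hpatdef] at hnotin; exact hnotin)
        exact mul_neg_of_pos_of_neg hc hgneg
    have hsump : 0 < ∑ j ∈ s, c j * affF (aa j) (bb j) ξp := by
      apply Finset.sum_pos'
      · intro j hj
        rcases eq_or_ne (c j) 0 with hcj | hcj
        · simp [hcj]
        · exact (hkeyp j hj hcj).le
      · exact ⟨j0, hj0s, hkeyp j0 hj0s hj0⟩
    have hsumn : ∑ j ∈ s, c j * affF (aa j) (bb j) ξn < 0 := by
      have hpos : 0 < ∑ j ∈ s, -(c j * affF (aa j) (bb j) ξn) := by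
        apply Finset.sum_pos'
        · intro j hj
          rcases eq_or_ne (c j) 0 with hcj | hcj
          · simp [hcj]
          · linarith [hkeyn j hj hcj]
        · exact ⟨j0, hj0s, by linarith [hkeyn j0 hj0s hj0]⟩
      rw [Finset.sum_neg_distrib] at hpos
      linarith
    rw [hval ξp] at hsump
    rw [hval ξn] at hsumn
    linarith
  have hcount : 𝒜.card ≤ ∑ i ∈ Finset.Iic t, h.choose i := by
    have h1 := Finset.card_le_card_shatterer 𝒜
    have h2 := Finset.card_shatterer_le_sum_vcDim (𝒜 := 𝒜)
    have h3 : 𝒜.vcDim ≤ t := by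
      apply Finset.sup_le
      intro s hs
      exact hshat s (Finset.mem_shatterer.1 hs)
    have h4 : ∑ k ∈ Finset.Iic 𝒜.vcDim, (Fintype.card (Fin h)).choose k
        ≤ ∑ i ∈ Finset.Iic t, h.choose i := by
      rw [Fintype.card_fin]
      exact Finset.sum_le_sum_of_subset (Finset.Iic_subset_Iic.2 h3)
    omega
  -- convex cells
  set Cσ : Finset (Fin h) → Set (Fin d → ℝ) := fun σ =>
    {ξ | ξ ∈ U ∧ ∀ j ∈ J, (j ∈ σ → 0 < affF (aa j) (bb j) ξ) ∧
      (j ∉ σ → affF (aa j) (bb j) ξ < 0)} with hCσdef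
  have hchar : ∀ σ, σ ⊆ J → ∀ ξ, (ξ ∈ Cσ σ ↔ ξ ∈ U' ∧ pat ξ = σ) := by
    intro σ hσJ ξ
    constructor
    · rintro ⟨hξU, hsig⟩
      have hav : ∀ j ∈ J, affF (aa j) (bb j) ξ ≠ 0 := by
        intro j hj
        by_cases hjσ : j ∈ σ
        · exact ne_of_gt ((hsig j hj).1 hjσ)
        · exact ne_of_lt ((hsig j hj).2 hjσ)
      refine ⟨⟨hξU, hav⟩, ?_⟩
      rw [hpatdef]
      ext j
      simp only [Finset.mem_filter]
      constructor
      · rintro ⟨hjJ, hpos⟩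
        by_contra hjσ
        exact absurd hpos (not_lt.2 ((hsig j hjJ).2 hjσ).le)
      · intro hjσ
        exact ⟨hσJ hjσ, (hsig j (hσJ hjσ)).1 hjσ⟩
    · rintro ⟨⟨hξU, hav⟩, hpatξ⟩
      refine ⟨hξU, fun j hj => ⟨fun hjσ => ?_, fun hjσ => ?_⟩⟩
      · rw [← hpatξ, hpatdef] at hjσ
        exact (Finset.mem_filter.1 hjσ).2
      · rcases lt_or_gt_of_ne (hav j hj) with hlt | hgt
        · exact hlt
        · exfalso
          have hin : j ∈ pat ξ := by
            rw [hpatdef]; exact Finset.mem_filter.2 ⟨hj, hgt⟩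
          rw [hpatξ] at hin
          exact hjσ hin
  have hCconv : ∀ σ, Convex ℝ (Cσ σ) := by
    intro σ ξ hξ ξ' hξ' p q hp hq hpq
    refine ⟨hUconv hξ.1 hξ'.1 hp hq hpq, fun j hj => ⟨fun hjσ => ?_, fun hjσ => ?_⟩⟩
    · rw [affF_comb _ _ _ _ _ _ hpq]
      exact convex_pos_comb hp hq hpq ((hξ.2 j hj).1 hjσ) ((hξ'.2 j hj).1 hjσ)
    · rw [affF_comb _ _ _ _ _ _ hpq]
      exact convex_neg_comb hp hq hpq ((hξ.2 j hj).2 hjσ) ((hξ'.2 j hj).2 hjσ)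
  have hfinrank : Module.finrank ℝ (Fin d → ℝ) = d := by simp
  -- per-cell selection of at most d+1 responses via Helly's theorem
  have hTσ : ∀ σ ∈ 𝒜, ∃ T : Finset Ey, (∀ y ∈ T, y ∈ S) ∧ T.card ≤ d + 1 ∧
      ∀ ξ ∈ Cσ σ, ∃ y ∈ T, (∀ l, 0 ≤ affF (ar y l) (br y l) ξ) ∧ G y ξ ≤ r := by
    intro σ hσ𝒜
    obtain ⟨ξσ, hξσU', hξσpat⟩ := (Finset.mem_filter.1 hσ𝒜).2
    have hσJ : σ ⊆ J := by
      rw [← hξσpat, hpatdef]; exact Finset.filter_subset _ _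
    set Yσ : Finset Ey := hSfin.toFinset.filter
      (fun y => ∀ l, 0 ≤ affF (ar y l) (br y l) ξσ) with hYσdef
    set SS : Ey → Set (Fin d → ℝ) := fun y => {ξ | ξ ∈ Cσ σ ∧ r < G y ξ} with hSSdef
    have hSSconv : ∀ y ∈ Yσ, Convex ℝ (SS y) := by
      intro y hy
      have hyS : y ∈ S := hSfin.mem_toFinset.1 (Finset.mem_filter.1 hy).1
      intro ξ hξ ξ' hξ' p q hp hq hpq
      refine ⟨hCconv σ hξ.1 hξ'.1 hp hq hpq, ?_⟩
      have hcc := (hGconc y hyS).2 hξ.1.1 hξ'.1.1 hp hq hpq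
      simp only [smul_eq_mul] at hcc
      have hlt := convex_lt_comb hp hq hpq hξ.2 hξ'.2
      linarith
    have hex : ∃ I ⊆ Yσ, I.card ≤ d + 1 ∧ (⋂ y ∈ I, SS y) = ∅ := by
      by_contra hc
      push_neg at hc
      have hne := Convex.helly_theorem' (𝕜 := ℝ) (F := SS) (s := Yσ) hSSconv
        (fun I hI hIcard => hc I hI (by rw [hfinrank] at hIcard; exact hIcard))
      obtain ⟨ξ, hξ⟩ := hne
      rw [Set.mem_iInter₂] at hξ
      obtain ⟨y1, hy1S, hy1feas, hy1G⟩ := hstep1 ξσ (hU'subU hξσU')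
      have hy1Yσ : y1 ∈ Yσ := Finset.mem_filter.2 ⟨hSfin.mem_toFinset.2 hy1S, hy1feas⟩
      have hξC : ξ ∈ Cσ σ := (hξ y1 hy1Yσ).1
      obtain ⟨y2, hy2S, hy2feas, hy2G⟩ := hstep1 ξ hξC.1
      have hξU' : ξ ∈ U' ∧ pat ξ = σ := (hchar σ hσJ ξ).1 hξC
      have hy2feasσ : ∀ l, 0 ≤ affF (ar y2 l) (br y2 l) ξσ :=
        hclaimA y2 hy2S ξ hξU'.1 ξσ hξσU' (by rw [hξU'.2, hξσpat]) hy2feas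
      have hy2Yσ : y2 ∈ Yσ := Finset.mem_filter.2 ⟨hSfin.mem_toFinset.2 hy2S, hy2feasσ⟩
      have hcontr := (hξ y2 hy2Yσ).2
      linarith
    obtain ⟨I, hIsub, hIcard, hIempty⟩ := hex
    refine ⟨I, ?_, hIcard, ?_⟩
    · intro y hy
      exact hSfin.mem_toFinset.1 (Finset.mem_filter.1 (hIsub hy)).1
    · intro ξ hξC
      have hξnot : ξ ∉ ⋂ y ∈ I, SS y := by rw [hIempty]; exact Set.notMem_empty ξ
      rw [Set.mem_iInter₂] at hξnot
      push_neg at hξnot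
      obtain ⟨y, hyI, hySS⟩ := hξnot
      have hyYσ := hIsub hyI
      have hyS : y ∈ S := hSfin.mem_toFinset.1 (Finset.mem_filter.1 hyYσ).1
      have hyfeasσ : ∀ l, 0 ≤ affF (ar y l) (br y l) ξσ := (Finset.mem_filter.1 hyYσ).2
      have hξU' := (hchar σ hσJ ξ).1 hξC
      have hyfeas : ∀ l, 0 ≤ affF (ar y l) (br y l) ξ :=
        hclaimA y hyS ξσ hξσU' ξ hξU'.1 (by rw [hξU'.2, hξσpat]) hyfeasσ
      have hG : G y ξ ≤ r := by
        by_contra hGc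
        push_neg at hGc
        exact hySS ⟨hξC, hGc⟩
      exact ⟨y, hyI, hyfeas, hG⟩
  choose TT hTT1 hTT2 hTT3 using hTσ
  set Tbig : Finset Ey := 𝒜.attach.biUnion (fun σ => TT σ.1 σ.2) with hTbigdef
  have hTbigS : ∀ y ∈ Tbig, y ∈ S := by
    intro y hy
    obtain ⟨σ, hσ, hyT⟩ := Finset.mem_biUnion.1 hy
    exact hTT1 σ.1 σ.2 y hyT
  have hTbigcard : Tbig.card ≤ (d+1) * (∑ i ∈ Finset.Iic t, h.choose i) := by
    calc Tbig.card ≤ ∑ σ ∈ 𝒜.attach, (TT σ.1 σ.2).card := Finset.card_biUnion_le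
      _ ≤ ∑ _σ ∈ 𝒜.attach, (d+1) := Finset.sum_le_sum fun σ _ => hTT2 σ.1 σ.2
      _ = 𝒜.card * (d+1) := by rw [Finset.sum_const, Finset.card_attach, smul_eq_mul]
      _ ≤ (∑ i ∈ Finset.Iic t, h.choose i) * (d+1) := Nat.mul_le_mul_right _ hcount
      _ = (d+1) * (∑ i ∈ Finset.Iic t, h.choose i) := Nat.mul_comm _ _
  have hcovU' : ∀ ξ ∈ U', ∃ y ∈ Tbig, (∀ l, 0 ≤ affF (ar y l) (br y l) ξ) ∧ G y ξ ≤ r := by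
    intro ξ hξ
    have hσ𝒜 : pat ξ ∈ 𝒜 := Finset.mem_filter.2 ⟨Finset.mem_univ _, ξ, hξ, rfl⟩
    have hσJ : pat ξ ⊆ J := by rw [hpatdef]; exact Finset.filter_subset _ _
    have hξC : ξ ∈ Cσ (pat ξ) := (hchar _ hσJ ξ).2 ⟨hξ, rfl⟩
    obtain ⟨y, hyT, hfeas, hG⟩ := hTT3 (pat ξ) hσ𝒜 ξ hξC
    exact ⟨y, Finset.mem_biUnion.2 ⟨⟨pat ξ, hσ𝒜⟩, Finset.mem_attach _ _, hyT⟩, hfeas, hG⟩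
  have hcovU : ∀ ξ ∈ U, ∃ y ∈ Tbig, (∀ l, 0 ≤ affF (ar y l) (br y l) ξ) ∧ G y ξ ≤ r := by
    intro ξ hξ
    set Good : Set (Fin d → ℝ) :=
      ⋃ y ∈ Tbig, {z | (∀ l, 0 ≤ affF (ar y l) (br y l) z) ∧ G y z ≤ r} with hGooddef
    have hclosed : IsClosed Good := by
      apply Set.Finite.isClosed_biUnion Tbig.finite_toSet
      intro y hy
      have heq : {z | (∀ l, 0 ≤ affF (ar y l) (br y l) z) ∧ G y z ≤ r}
          = (⋂ l, {z | 0 ≤ affF (ar y l) (br y l) z}) ∩ {z | G y z ≤ r} := by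
        ext z; simp [Set.mem_iInter]
      rw [heq]
      exact ((isClosed_iInter fun l =>
        isClosed_le continuous_const (affF_cont _ _)).inter
        (isClosed_le (hGcont y (hTbigS y (by exact_mod_cast hy))) continuous_const))
    have hsub : U' ⊆ Good := by
      intro z hz
      obtain ⟨y, hyT, h1, h2⟩ := hcovU' z hz
      exact Set.mem_biUnion hyT ⟨h1, h2⟩
    have hmemcl : ξ ∈ closure U' := by
      rw [Metric.mem_closure_iff]
      intro ε hε
      obtain ⟨ξ', hξ', hd2⟩ := hdense ξ hξ ε hε
      exact ⟨ξ', hξ', by rwa [dist_comm]⟩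
    have hmemG : ξ ∈ Good := by
      have h5 := closure_mono hsub hmemcl
      rwa [hclosed.closure_eq] at h5
    obtain ⟨y, hyT, h6⟩ := Set.mem_iUnion₂.1 hmemG
    exact ⟨y, hyT, h6.1, h6.2⟩
  obtain ⟨ys0, hys0mem, hys0sur⟩ := exists_enum (Tbig.finite_toSet)
  refine ⟨(↑Tbig : Set Ey).ncard, ys0, ?_, fun i => hTbigS _ (by exact_mod_cast hys0mem i), ?_⟩
  · rw [Set.ncard_coe_finset]; exact hTbigcard
  · intro ξ hξ
    obtain ⟨y, hyT, hfeas, hG⟩ := hcovU ξ hξ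
    obtain ⟨i, rfl⟩ := hys0sur y (by exact_mod_cast hyT)
    refine ⟨i, ?_⟩
    rw [hFt _ ξ hfeas, hvr]
    exact_mod_cast hG

set_option maxHeartbeats 1000000 in
lemma pointwise_eq {nx ny nξ m : ℕ}
    (X : Set (Fin nx → ℝ))
    (Y : Set (Fin ny → ℝ)) (hYfin : Y.Finite) (hYne : Y.Nonempty)
    (Yx : (Fin nx → ℝ) → Set (Fin ny → ℝ))
    (hYxsub : ∀ x ∈ X, Yx x ⊆ Y) (hYxne : ∀ x ∈ X, (Yx x).Nonempty)
    (U : Set (Fin nξ → ℝ)) (hUconv : Convex ℝ U) (hUne : U.Nonempty)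
    (g : (Fin nx → ℝ) → (Fin ny → ℝ) → (Fin nξ → ℝ) → ℝ)
    (hgcont : Continuous fun p : (Fin nx → ℝ) × (Fin ny → ℝ) × (Fin nξ → ℝ) =>
      g p.1 p.2.1 p.2.2)
    (hgconc : ∀ x ∈ X, ∀ y ∈ Y, ConcaveOn ℝ U (g x y))
    (hv : Fin m → ℤ) (H : Matrix (Fin m) (Fin nξ) ℤ)
    (A0 : Matrix (Fin m) (Fin nx) ℤ) (Ai : Fin nξ → Matrix (Fin m) (Fin nx) ℤ)
    (B0 : Matrix (Fin m) (Fin ny) ℤ) (Bi : Fin nξ → Matrix (Fin m) (Fin ny) ℤ)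
    (η : ℕ)
    (hηb : ∀ x ∈ X, Feasible2RO hv H A0 Ai B0 Bi Yx U x →
      (HypSet hv H A0 Ai B0 Bi Yx U x).ncard ≤ η)
    (t : ℕ) (hT : t = nξ ∨ (t = min m nξ ∧ ∀ i, Bi i = 0))
    (k : ℕ)
    (hk : min Y.ncard ((nξ + 1) * ∑ i ∈ Finset.range (t + 1), Nat.choose η i) ≤ k)
    (x : Fin nx → ℝ) (hx : x ∈ X) :
    kValE U (Yx x) (fES g hv H A0 Ai B0 Bi x) k
      = worstValE U (Yx x) (fES g hv H A0 Ai B0 Bi x) := by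
  classical
  have hSfin : (Yx x).Finite := hYfin.subset (hYxsub x hx)
  have hSne : (Yx x).Nonempty := hYxne x hx
  set F := fES g hv H A0 Ai B0 Bi x with hFdef
  have hFt : ∀ y ξ, (∀ l, 0 ≤ affF (rowCoef H Ai Bi x y l) (rowRhs hv A0 B0 x y l) ξ) →
      F y ξ = ((g x y ξ : ℝ) : EReal) := by
    intro y ξ hrows
    rw [hFdef]
    simp only [fES]
    rw [if_pos ((feasS_iff_rows hv H A0 Ai B0 Bi x y ξ).2 hrows)]
  have hFn : ∀ y ξ, ¬ (∀ l, 0 ≤ affF (rowCoef H Ai Bi x y l) (rowRhs hv A0 B0 x y l) ξ) →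
      F y ξ = ⊤ := by
    intro y ξ hrows
    rw [hFdef]
    simp only [fES]
    rw [if_neg (fun hf => hrows ((feasS_iff_rows hv H A0 Ai B0 Bi x y ξ).1 hf))]
  set N : ℕ := (nξ + 1) * ∑ i ∈ Finset.range (t + 1), Nat.choose η i with hNdef
  have hN1 : 1 ≤ N := by
    rw [hNdef]
    have h0 : 1 ≤ ∑ i ∈ Finset.range (t + 1), Nat.choose η i := by
      have := Finset.single_le_sum (f := fun i => Nat.choose η i)
        (fun i _ => Nat.zero_le _) (Finset.mem_range.2 (Nat.succ_pos t))
      simpa using this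
    calc 1 = 1 * 1 := rfl
      _ ≤ (nξ + 1) * ∑ i ∈ Finset.range (t + 1), Nat.choose η i :=
        Nat.mul_le_mul (by omega) h0
  rcases le_or_gt Y.ncard N with hcase | hcase
  · -- enough policies to enumerate all of Y
    have hk' : Y.ncard ≤ k := le_trans (by rw [min_eq_left hcase]) hk
    obtain ⟨ys, hmem, hsur⟩ := exists_enum hSfin
    refine kValE_eq_of_tuple hSne
      (le_trans (le_trans (Set.ncard_le_ncard (hYxsub x hx) hYfin) hk') (le_refl k)) ys hmem ?_
    intro ξ hξ
    obtain ⟨y, hy, hmin⟩ := exists_min_eReal hSfin hSne (fun y => F y ξ)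
    obtain ⟨i, hi⟩ := hsur y hy
    exact ⟨i, by rw [hi]; exact le_trans hmin (inner_le_worstValE (Yx x) F hξ)⟩
  · have hk' : N ≤ k := le_trans (by rw [min_eq_right hcase.le]) hk
    by_cases hvt : worstValE U (Yx x) F = ⊤
    · obtain ⟨y0, hy0⟩ := hYxne x hx
      refine kValE_eq_of_tuple (c := 1) hSne ?_ (fun _ => y0) (fun _ => hy0) ?_
      · exact le_trans hN1 hk'
      · intro ξ hξ
        exact ⟨0, by rw [hvt]; exact le_top⟩
    · -- x is feasible for 2RO
      have hfeasx : Feasible2RO hv H A0 Ai B0 Bi Yx U x := by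
        intro ξ hξ
        obtain ⟨y, hy, hmin⟩ := exists_min_eReal hSfin hSne (fun y => F y ξ)
        refine ⟨y, hy, ?_⟩
        by_contra hnf
        have htop : F y ξ = ⊤ := by rw [hFdef]; simp only [fES]; rw [if_neg hnf]
        have hle : F y ξ ≤ worstValE U (Yx x) F :=
          le_trans hmin (inner_le_worstValE (Yx x) F hξ)
        rw [htop] at hle
        exact hvt (top_le_iff.1 hle)
      set Hx := HypSet hv H A0 Ai B0 Bi Yx U x with hHxdef
      have hHfin : Hx.Finite := by
        have hsub : Hx ⊆ (fun p : (Fin ny → ℝ) × Fin m =>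
            {ξ : Fin nξ → ℝ | ∑ i, rowCoef H Ai Bi x p.1 p.2 i * ξ i
              = rowRhs hv A0 B0 x p.1 p.2}) '' ((Yx x) ×ˢ (Set.univ : Set (Fin m))) := by
          rintro P ⟨y, hy, l, hne, hP, hnon⟩
          exact ⟨(y, l), ⟨hy, trivial⟩, hP.symm⟩
        exact Set.Finite.subset ((hSfin.prod Set.finite_univ).image _) hsub
      have hHcard : Hx.ncard ≤ η := hηb x hx hfeasx
      obtain ⟨Ps, hPs1, hPs2⟩ := exists_enum hHfin
      have hwit : ∀ i : Fin Hx.ncard, ∃ yl : (Fin ny → ℝ) × Fin m, yl.1 ∈ Yx x ∧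
          rowCoef H Ai Bi x yl.1 yl.2 ≠ 0 ∧
          Ps i = {ξ : Fin nξ → ℝ | ∑ ii, rowCoef H Ai Bi x yl.1 yl.2 ii * ξ ii
            = rowRhs hv A0 B0 x yl.1 yl.2} := by
        intro i
        obtain ⟨y, hy, l, hne, hP, hnon⟩ := hPs1 i
        exact ⟨(y, l), hy, hne, hP⟩
      choose w hw1 hw2 hw3 using hwit
      set aa : Fin Hx.ncard → Fin nξ → ℝ := fun j => rowCoef H Ai Bi x (w j).1 (w j).2
        with haadef
      set bb : Fin Hx.ncard → ℝ := fun j => rowRhs hv A0 B0 x (w j).1 (w j).2 with hbbdef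
      have hmemP : ∀ (j : Fin Hx.ncard) (ξ : Fin nξ → ℝ),
          affF (aa j) (bb j) ξ = 0 ↔ ξ ∈ Ps j := by
        intro j ξ
        rw [haadef, hbbdef, hw3 j]
        simp only [affF, Set.mem_setOf_eq]
        exact sub_eq_zero
      have hcover : ∀ y ∈ Yx x, ∀ l : Fin m,
          (∃ u ∈ U, affF (rowCoef H Ai Bi x y l) (rowRhs hv A0 B0 x y l) u = 0) →
          rowCoef H Ai Bi x y l ≠ 0 →
          ∃ j : Fin Hx.ncard, ∀ ξ, (affF (rowCoef H Ai Bi x y l) (rowRhs hv A0 B0 x y l) ξ = 0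
            ↔ affF (aa j) (bb j) ξ = 0) := by
        intro y hy l hz ha
        obtain ⟨u, hu, hu0⟩ := hz
        set P' : Set (Fin nξ → ℝ) := {ξ | ∑ ii, rowCoef H Ai Bi x y l ii * ξ ii
          = rowRhs hv A0 B0 x y l} with hP'def
        have hP'mem : P' ∈ Hx := by
          refine ⟨y, hy, l, ha, rfl, ⟨u, ?_, hu⟩⟩
          rw [hP'def]
          exact sub_eq_zero.1 hu0
        obtain ⟨j, hj⟩ := hPs2 P' hP'mem
        refine ⟨j, fun ξ => ?_⟩
        rw [hmemP j ξ, hj]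
        simp only [hP'def, affF, Set.mem_setOf_eq]
        exact sub_eq_zero
      have hdep : ∀ s : Finset (Fin Hx.ncard), t < s.card → ∃ c : Fin Hx.ncard → ℝ,
          (∃ j ∈ s, c j ≠ 0) ∧ ∀ i, ∑ j ∈ s, c j * aa j i = 0 := by
        rcases hT with rfl | ⟨rfl, hBi⟩
        · exact hdep_dim aa
        · rcases le_total nξ m with hmn | hmn
          · intro s hs
            rw [min_eq_right hmn] at hs
            exact hdep_dim aa s hs
          · intro s hs
            rw [min_eq_left hmn] at hs
            refine hdep_classes aa (fun j => (w j).2) ?_ s hs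
            intro j j' hcls
            rw [haadef]
            funext i
            simp only [rowCoef, hBi, Matrix.zero_apply, Int.cast_zero, zero_mul,
              Finset.sum_const_zero, add_zero, hcls]
      obtain ⟨c, ys, hcb, hmem, hcov⟩ := master t Hx.ncard U hUconv hUne (Yx x) hSfin hSne
        (g x)
        (fun y hy => hgcont.comp (Continuous.prodMk continuous_const
          (Continuous.prodMk continuous_const continuous_id)))
        (fun y hy => hgconc x hx y (hYxsub x hx hy))
        (fun y l => rowCoef H Ai Bi x y l) (fun y l => rowRhs hv A0 B0 x y l)
        F hFt hFn aa bb hcover hdep hvt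
      have hck : c ≤ k := by
        refine le_trans hcb (le_trans ?_ hk')
        rw [hNdef]
        apply Nat.mul_le_mul_left
        have hIic : Finset.Iic t = Finset.range (t + 1) := by
          ext a; simp [Nat.lt_succ_iff]
        rw [hIic]
        exact Finset.sum_le_sum fun i _ => Nat.choose_le_choose i hHcard
      exact kValE_eq_of_tuple hSne hck ys hmem hcov

end Stmt11Aux
end


/-- With continuous `g`, concave in `ξ`, and structured uncertain constraints,
the `k`-adaptability problem has the same optimal value and the same optimal first-stage
solutions as the two-stage robust problem whenever
`k ≥ min{|Y|, (n_ξ+1)·Σ_{i=0}^{min{m,n_ξ}} C(η,i)}` in the fixed-recourse case (`Bⁱ = 0`), and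
whenever `k ≥ min{|Y|, (n_ξ+1)·Σ_{i=0}^{n_ξ} C(η,i)}` in the general random-recourse case. -/
theorem stmt_11 (nx ny nξ m : ℕ) (hnx : 0 < nx) (hny : 0 < ny) (hnξ : 0 < nξ) (hm0 : 0 < m)
    (X : Set (Fin nx → ℝ)) (hXcomp : IsCompact X) (hXne : X.Nonempty)
    (Y : Set (Fin ny → ℝ)) (hYfin : Y.Finite) (hYne : Y.Nonempty)
    (hYint : ∀ y ∈ Y, ∀ i, ∃ z : ℤ, y i = (z : ℝ))
    (Yx : (Fin nx → ℝ) → Set (Fin ny → ℝ))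
    (hYxsub : ∀ x ∈ X, Yx x ⊆ Y) (hYxne : ∀ x ∈ X, (Yx x).Nonempty)
    (U : Set (Fin nξ → ℝ)) (hUcomp : IsCompact U) (hUconv : Convex ℝ U) (hUne : U.Nonempty)
    (g : (Fin nx → ℝ) → (Fin ny → ℝ) → (Fin nξ → ℝ) → ℝ)
    (hgcont : Continuous fun p : (Fin nx → ℝ) × (Fin ny → ℝ) × (Fin nξ → ℝ) =>
      g p.1 p.2.1 p.2.2)
    (hgconc : ∀ x ∈ X, ∀ y ∈ Y, ConcaveOn ℝ U (g x y))
    (hv : Fin m → ℤ) (H : Matrix (Fin m) (Fin nξ) ℤ)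
    (A0 : Matrix (Fin m) (Fin nx) ℤ) (Ai : Fin nξ → Matrix (Fin m) (Fin nx) ℤ)
    (B0 : Matrix (Fin m) (Fin ny) ℤ) (Bi : Fin nξ → Matrix (Fin m) (Fin ny) ℤ)
    (hfeas : ∃ x ∈ X, Feasible2RO hv H A0 Ai B0 Bi Yx U x)
    (η : ℕ) (hη1 : 1 ≤ η)
    (hηb : ∀ x ∈ X, Feasible2RO hv H A0 Ai B0 Bi Yx U x →
      (HypSet hv H A0 Ai B0 Bi Yx U x).ncard ≤ η) :
    ((∀ i, Bi i = 0) → ∀ k : ℕ,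
      min Y.ncard ((nξ + 1) * ∑ i ∈ Finset.range (min m nξ + 1), Nat.choose η i) ≤ k →
      (⨅ x ∈ X, kValE U (Yx x) (fES g hv H A0 Ai B0 Bi x) k) =
        (⨅ x ∈ X, worstValE U (Yx x) (fES g hv H A0 Ai B0 Bi x)) ∧
      (∀ x ∈ X,
        kValE U (Yx x) (fES g hv H A0 Ai B0 Bi x) k =
          (⨅ x' ∈ X, kValE U (Yx x') (fES g hv H A0 Ai B0 Bi x') k) ↔
        worstValE U (Yx x) (fES g hv H A0 Ai B0 Bi x) =
          (⨅ x' ∈ X, worstValE U (Yx x') (fES g hv H A0 Ai B0 Bi x')))) ∧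
    (∀ k : ℕ,
      min Y.ncard ((nξ + 1) * ∑ i ∈ Finset.range (nξ + 1), Nat.choose η i) ≤ k →
      (⨅ x ∈ X, kValE U (Yx x) (fES g hv H A0 Ai B0 Bi x) k) =
        (⨅ x ∈ X, worstValE U (Yx x) (fES g hv H A0 Ai B0 Bi x)) ∧
      (∀ x ∈ X,
        kValE U (Yx x) (fES g hv H A0 Ai B0 Bi x) k =
          (⨅ x' ∈ X, kValE U (Yx x') (fES g hv H A0 Ai B0 Bi x') k) ↔
        worstValE U (Yx x) (fES g hv H A0 Ai B0 Bi x) =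
          (⨅ x' ∈ X, worstValE U (Yx x') (fES g hv H A0 Ai B0 Bi x')))) := by
  constructor
  · intro hBi k hk
    have hpt : ∀ x ∈ X, kValE U (Yx x) (fES g hv H A0 Ai B0 Bi x) k
        = worstValE U (Yx x) (fES g hv H A0 Ai B0 Bi x) := fun x hx =>
      Stmt11Aux.pointwise_eq X Y hYfin hYne Yx hYxsub hYxne U hUconv hUne g hgcont hgconc
        hv H A0 Ai B0 Bi η hηb (min m nξ) (Or.inr ⟨rfl, hBi⟩) k hk x hx
    have hinf : (⨅ x ∈ X, kValE U (Yx x) (fES g hv H A0 Ai B0 Bi x) k)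
        = ⨅ x ∈ X, worstValE U (Yx x) (fES g hv H A0 Ai B0 Bi x) :=
      iInf_congr fun x => iInf_congr fun hx => hpt x hx
    exact ⟨hinf, fun x hx => by rw [hpt x hx, hinf]⟩
  · intro k hk
    have hpt : ∀ x ∈ X, kValE U (Yx x) (fES g hv H A0 Ai B0 Bi x) k
        = worstValE U (Yx x) (fES g hv H A0 Ai B0 Bi x) := fun x hx =>
      Stmt11Aux.pointwise_eq X Y hYfin hYne Yx hYxsub hYxne U hUconv hUne g hgcont hgconc
        hv H A0 Ai B0 Bi η hηb nξ (Or.inl rfl) k hk x hx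
    have hinf : (⨅ x ∈ X, kValE U (Yx x) (fES g hv H A0 Ai B0 Bi x) k)
        = ⨅ x ∈ X, worstValE U (Yx x) (fES g hv H A0 Ai B0 Bi x) :=
      iInf_congr fun x => iInf_congr fun hx => hpt x hx
    exact ⟨hinf, fun x hx => by rw [hpt x hx, hinf]⟩
end

section
/- Assume g is L-Lipschitz in y with L > 0, i.e., |g(x,y,ξ) − g(x,y′,ξ)| ≤ L·‖y − y′‖ for all x ∈ X, ξ ∈ U, y, y′ ∈ Y, assume for every x ∈ X there exist R convex recourse-stable regions D_1,…,D_R ⊆ U with cl(D_1) ∪ … ∪ cl(D_R) = U, and assume at least one x ∈ X is feasible for 2RO-C. Then for every integer s with 1 ≤ s ≤ n_ξ + 1 it holds that opt(R·s) − opt(2RO-C) ≤ L · diam(Y) · ln((n_ξ+1)/s), where diam(Y) = max_{y,y′∈Y} ‖y − y′‖. -/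
noncomputable section

variable {nx ny nξ m : ℕ}

/-- Feasibility of `(x, y)` under scenario `ξ`: `A(ξ)x + B(ξ)y ≥ h(ξ)` componentwise. -/
def Feas (A : (Fin nξ → ℝ) →ᵃ[ℝ] Matrix (Fin m) (Fin nx) ℝ)
    (B : (Fin nξ → ℝ) →ᵃ[ℝ] Matrix (Fin m) (Fin ny) ℝ)
    (hm : (Fin nξ → ℝ) →ᵃ[ℝ] (Fin m → ℝ))
    (x : Fin nx → ℝ) (y : EuclideanSpace ℝ (Fin ny)) (ξ : Fin nξ → ℝ) : Prop :=
  ∀ l, hm ξ l ≤ (∑ j, A ξ l j * x j) + ∑ j, B ξ l j * y j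

open Classical in
/-- `f(x,y,ξ) = g(x,y,ξ)` if `A(ξ)x + B(ξ)y ≥ h(ξ)` and `+∞` otherwise. -/
def fE (g : (Fin nx → ℝ) → EuclideanSpace ℝ (Fin ny) → (Fin nξ → ℝ) → ℝ)
    (A : (Fin nξ → ℝ) →ᵃ[ℝ] Matrix (Fin m) (Fin nx) ℝ)
    (B : (Fin nξ → ℝ) →ᵃ[ℝ] Matrix (Fin m) (Fin ny) ℝ)
    (hm : (Fin nξ → ℝ) →ᵃ[ℝ] (Fin m → ℝ))
    (x : Fin nx → ℝ) (y : EuclideanSpace ℝ (Fin ny)) (ξ : Fin nξ → ℝ) : EReal :=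
  if Feas A B hm x y ξ then ((g x y ξ : ℝ) : EReal) else ⊤

/-- A convex set `D` is recourse-stable for `x`. -/
def RecourseStable (A : (Fin nξ → ℝ) →ᵃ[ℝ] Matrix (Fin m) (Fin nx) ℝ)
    (B : (Fin nξ → ℝ) →ᵃ[ℝ] Matrix (Fin m) (Fin ny) ℝ)
    (hm : (Fin nξ → ℝ) →ᵃ[ℝ] (Fin m → ℝ))
    (Yx : (Fin nx → ℝ) → Set (EuclideanSpace ℝ (Fin ny)))
    (x : Fin nx → ℝ) (D : Set (Fin nξ → ℝ)) : Prop :=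
  ∀ y ∈ Yx x, (∀ ξ ∈ D, Feas A B hm x y ξ) ∨ (∀ ξ ∈ D, ¬ Feas A B hm x y ξ)

end

lemma log_succ_ge (N : ℕ) (hN : 0 < N) :
    (1:ℝ)/(N+1) ≤ Real.log (N+1) - Real.log N := by
  have hN0 : (0:ℝ) < N := by exact_mod_cast hN
  have h1 : (0:ℝ) < N + 1 := by linarith
  have key : (N:ℝ)/(N+1) ≤ Real.exp (-(1/(N+1))) := by
    have := Real.add_one_le_exp (-(1/((N:ℝ)+1)))
    have heq : -(1/((N:ℝ)+1)) + 1 = N/(N+1) := by field_simp; ring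
    linarith [heq ▸ this]
  have hlog : Real.log ((N:ℝ)/(N+1)) ≤ -(1/(N+1)) := by
    calc Real.log ((N:ℝ)/(N+1)) ≤ Real.log (Real.exp (-(1/(N+1)))) :=
          Real.log_le_log (by positivity) key
      _ = -(1/(N+1)) := Real.log_exp _
  rw [Real.log_div (ne_of_gt hN0) (by positivity)] at hlog
  linarith

lemma harm_le_log (s : ℕ) (hs : 1 ≤ s) : ∀ N : ℕ, s ≤ N →
    ∑ i ∈ Finset.Ico s N, (1:ℝ)/(i+1) ≤ Real.log N - Real.log s := by
  intro N hN
  induction N, hN using Nat.le_induction with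
  | base => simp
  | succ N hN ih =>
    rw [Finset.sum_Ico_succ_top hN]
    have h2 := log_succ_ge N (lt_of_lt_of_le hs hN)
    push_cast
    push_cast at ih h2
    linarith

lemma minimax_lemma {n : ℕ} {ι : Type*} [Fintype ι] [Nonempty ι]
    {C : Set (Fin n → ℝ)} (hCconv : Convex ℝ C) (hCne : C.Nonempty)
    {G : ι → (Fin n → ℝ) → ℝ} (hGconc : ∀ y, ConcaveOn ℝ C (G y))
    {v : ℝ} (hv : ∀ ξ ∈ C, ∃ y, G y ξ ≤ v) :
    ∃ lam : ι → ℝ, (∀ y, 0 ≤ lam y) ∧ (∑ y, lam y = 1) ∧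
      ∀ ξ ∈ C, ∑ y, lam y * G y ξ ≤ v := by
  classical
  set Z : Set (ι → ℝ) := {z | ∃ ξ ∈ C, ∀ y, z y ≤ G y ξ} with hZ
  set P : Set (ι → ℝ) := {z | ∀ y, v < z y} with hP
  have hZconv : Convex ℝ Z := by
    rintro z ⟨ξ, hξ, hz⟩ z' ⟨ξ', hξ', hz'⟩ a b ha hb hab
    refine ⟨a • ξ + b • ξ', hCconv hξ hξ' ha hb hab, fun y => ?_⟩
    have := (hGconc y).2 hξ hξ' ha hb hab
    have h1 : a * z y ≤ a * G y ξ := mul_le_mul_of_nonneg_left (hz y) ha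
    have h2 : b * z' y ≤ b * G y ξ' := mul_le_mul_of_nonneg_left (hz' y) hb
    simp only [Pi.add_apply, Pi.smul_apply, smul_eq_mul] at *
    linarith
  have hPset : P = Set.pi Set.univ (fun _ : ι => Set.Ioi v) := by
    ext z; simp [hP, Set.mem_pi]
  have hPconv : Convex ℝ P := by
    rw [hPset]; exact convex_pi (fun _ _ => convex_Ioi v)
  have hPopen : IsOpen P := by
    rw [hPset]
    exact isOpen_set_pi Set.finite_univ (fun _ _ => isOpen_Ioi)
  have hdisj : Disjoint P Z := by
    rw [Set.disjoint_left]
    rintro z hzP ⟨ξ, hξ, hz⟩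
    obtain ⟨y, hy⟩ := hv ξ hξ
    exact absurd (le_trans (hz y) hy) (not_le.2 (hzP y))
  obtain ⟨f, u, hfP, hfZ⟩ := geometric_hahn_banach_open hPconv hPopen hZconv hdisj
  -- express f via coordinates
  set e : ι → (ι → ℝ) := fun y => fun j => if y = j then (1:ℝ) else 0 with he
  set mu : ι → ℝ := fun y => f (e y) with hmu
  have hf_eq : ∀ z : ι → ℝ, f z = ∑ y, z y * mu y := by
    intro z
    conv_lhs => rw [pi_eq_sum_univ z, map_sum]
    refine Finset.sum_congr rfl fun y _ => ?_
    rw [map_smul]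
    simp [hmu, he, smul_eq_mul]
  obtain ⟨ξ₀, hξ₀⟩ := hCne
  have hz₀ : (fun y => G y ξ₀) ∈ Z := ⟨ξ₀, hξ₀, fun y => le_rfl⟩
  -- mu ≤ 0
  have hmu_nonpos : ∀ y, mu y ≤ 0 := by
    intro y0
    by_contra hpos
    push_neg at hpos
    set t : ℝ := (f (fun y => G y ξ₀) - u) / mu y0 + 1 with ht
    have ht0 : 0 ≤ t := by
      have h0 : 0 ≤ (f (fun y => G y ξ₀) - u)/mu y0 :=
        div_nonneg (sub_nonneg.2 (hfZ _ hz₀)) hpos.le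
      rw [ht]; linarith
    have hmem : (fun y => G y ξ₀ - t * e y0 y) ∈ Z := by
      refine ⟨ξ₀, hξ₀, fun y => ?_⟩
      by_cases h : y0 = y
      · subst h; simp [he]; linarith
      · simp [he, h]
    have := hfZ _ hmem
    have hcalc : f (fun y => G y ξ₀ - t * e y0 y) = f (fun y => G y ξ₀) - t * mu y0 := by
      have : (fun y => G y ξ₀ - t * e y0 y) = (fun y => G y ξ₀) - t • e y0 := by
        ext y; simp [smul_eq_mul]
      rw [this, map_sub, map_smul, smul_eq_mul, hmu]
    rw [hcalc] at this
    have htmu : t * mu y0 = (f (fun y => G y ξ₀) - u) + mu y0 := by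
      rw [ht, add_mul, one_mul, div_mul_cancel₀ _ (ne_of_gt hpos)]
    nlinarith
  -- sum mu < 0
  have hconstP : ∀ t : ℝ, 0 < t → ((fun _ => v + t : ι → ℝ) ∈ P) := by
    intro t ht y; simpa using by linarith
  have hsum_neg : ∑ y, mu y < 0 := by
    rcases lt_or_ge (∑ y, mu y) 0 with h | h
    · exact h
    · exfalso
      have hzero : ∀ y, mu y = 0 := by
        intro y
        have h1 : ∑ y, mu y ≤ 0 := Finset.sum_nonpos (fun y _ => hmu_nonpos y)
        have hsum0 : ∑ y, mu y = 0 := le_antisymm h1 h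
        have := (Finset.sum_eq_zero_iff_of_nonpos (fun y _ => hmu_nonpos y)).1 hsum0
        exact this y (Finset.mem_univ y)
      have hfz : f (fun y => G y ξ₀) = 0 := by
        rw [hf_eq]; simp [hzero]
      have h1 : f (fun _ => v + 1 : ι → ℝ) < u := hfP _ (hconstP 1 one_pos)
      have h2 : f (fun _ => v + 1 : ι → ℝ) = 0 := by
        rw [hf_eq]; simp [hzero]
      have := hfZ _ hz₀
      rw [hfz] at this
      linarith
  set sig : ℝ := -∑ y, mu y with hsig
  have hsig_pos : 0 < sig := by simp [hsig]; linarith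
  refine ⟨fun y => -mu y / sig, fun y => div_nonneg (by linarith [hmu_nonpos y]) hsig_pos.le,
    ?_, ?_⟩
  · rw [← Finset.sum_div]
    rw [div_eq_one_iff_eq (ne_of_gt hsig_pos)]
    simp [hsig]
  · intro ξ hξ
    have hZξ : (fun y => G y ξ) ∈ Z := ⟨ξ, hξ, fun _ => le_rfl⟩
    have h1 : u ≤ ∑ y, G y ξ * mu y := by rw [← hf_eq]; exact hfZ _ hZξ
    have h2 : ∀ t : ℝ, 0 < t → ∑ y, (v + t) * mu y < u := by
      intro t ht
      have := hfP _ (hconstP t ht)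
      rwa [hf_eq] at this
    have key : ∀ t : ℝ, 0 < t → ∑ y, (-mu y / sig) * G y ξ ≤ v + t := by
      intro t ht
      have h3 : ∑ y, (v + t) * mu y = (v + t) * ∑ y, mu y := by
        rw [Finset.mul_sum]
      have h4 : (v + t) * ∑ y, mu y < ∑ y, G y ξ * mu y := lt_of_lt_of_le (h3 ▸ h2 t ht) h1
      have h5 : ∑ y, (-mu y / sig) * G y ξ = (∑ y, G y ξ * (-mu y)) / sig := by
        rw [Finset.sum_div]
        refine Finset.sum_congr rfl fun y _ => by ring
      rw [h5, div_le_iff₀ hsig_pos]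
      have h6 : ∑ y, G y ξ * (-mu y) = -∑ y, G y ξ * mu y := by
        rw [← Finset.sum_neg_distrib]
        refine Finset.sum_congr rfl fun y _ => by ring
      rw [h6]
      have h7 : (v + t) * sig = -((v + t) * ∑ y, mu y) := by rw [hsig]; ring
      linarith
    by_contra hcon
    push_neg at hcon
    have := key ((∑ y, (-mu y / sig) * G y ξ - v) / 2) (by linarith)
    linarith

lemma select_lemma {α : Type*} (K s : ℕ) (hs : 1 ≤ s) (hsK : s ≤ K)
    {ι : Type*} [Fintype ι] [Nonempty ι] (hcard : Fintype.card ι ≤ K)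
    (lam : ι → ℝ) (hlam0 : ∀ y, 0 ≤ lam y) (hlam1 : ∑ y, lam y = 1)
    {C : Set α} {G : ι → α → ℝ} {v Dc : ℝ} (hDc : 0 ≤ Dc)
    (hsum : ∀ ξ ∈ C, ∑ y, lam y * G y ξ ≤ v)
    (hpair : ∀ y y', ∀ ξ ∈ C, G y ξ - G y' ξ ≤ Dc) :
    ∃ yy : Fin s → ι, ∀ ξ ∈ C, ∃ i, G (yy i) ξ ≤ v + Dc * (Real.log K - Real.log s) := by
  classical
  set N := Fintype.card ι with hN
  have hN1 : 1 ≤ N := Fintype.card_pos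
  have hK1 : (1:ℝ) ≤ K := by exact_mod_cast le_trans hs hsK
  have hs1 : (1:ℝ) ≤ (s:ℝ) := by exact_mod_cast hs
  have hlogKs : 0 ≤ Real.log K - Real.log s := by
    have := Real.log_le_log (by linarith) (show (s:ℝ) ≤ K by exact_mod_cast hsK)
    linarith
  -- sorted enumeration (descending weights)
  obtain ⟨en⟩ : Nonempty (Fin N ≃ ι) := ⟨(Fintype.equivFin ι).symm⟩
  set w : Fin N → ℝ := fun i => lam (en i) with hw
  set σ := Tuple.sort w with hσ
  set ord : Fin N → ι := fun i => en (σ (Fin.rev i)) with hord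
  have hord_bij : Function.Bijective ord := by
    apply Function.Bijective.comp en.bijective
    exact (σ.bijective.comp (Equiv.bijective _ : Function.Bijective (_root_.Fin.revPerm (n := N))))
  set μ : Fin N → ℝ := fun i => lam (ord i) with hμ
  have hμ_anti : ∀ i j : Fin N, i ≤ j → μ j ≤ μ i := by
    intro i j hij
    have : Fin.rev j ≤ Fin.rev i := Fin.rev_le_rev.2 hij
    exact Tuple.monotone_sort w this
  have hμ0 : ∀ i, 0 ≤ μ i := fun i => hlam0 _
  have hμsum : ∑ i, μ i = 1 := by
    rw [← hlam1]
    exact Fintype.sum_bijective ord hord_bij _ _ (fun i => rfl)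
  have hμ_bound : ∀ i : Fin N, μ i ≤ 1 / ((i:ℕ) + 1 : ℝ) := by
    intro i
    have hsub : ∑ j ∈ Finset.univ.filter (fun j : Fin N => j ≤ i), μ j ≤ 1 := by
      rw [← hμsum]
      exact Finset.sum_le_sum_of_subset_of_nonneg (Finset.filter_subset _ _)
        (fun j _ _ => hμ0 j)
    have hcard' : (Finset.univ.filter (fun j : Fin N => j ≤ i)).card = (i:ℕ) + 1 := by
      have : Finset.univ.filter (fun j : Fin N => j ≤ i) = Finset.Iic i := by
        ext j; simp
      rw [this, Fin.card_Iic]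
    have hlow : ((i:ℕ) + 1 : ℝ) * μ i ≤ ∑ j ∈ Finset.univ.filter (fun j : Fin N => j ≤ i), μ j := by
      calc ((i:ℕ) + 1 : ℝ) * μ i
          = ∑ _j ∈ Finset.univ.filter (fun j : Fin N => j ≤ i), μ i := by
            rw [Finset.sum_const, hcard']; push_cast; ring
        _ ≤ _ := Finset.sum_le_sum (fun j hj => hμ_anti j i ((Finset.mem_filter.1 hj).2))
    have hpos : (0:ℝ) < (i:ℕ) + 1 := by positivity
    rw [le_div_iff₀ hpos]
    nlinarith
  -- reindexed weighted-sum bound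
  have hsum' : ∀ ξ ∈ C, ∑ i, μ i * G (ord i) ξ ≤ v := by
    intro ξ hξ
    have : ∑ i, μ i * G (ord i) ξ = ∑ y, lam y * G y ξ :=
      Fintype.sum_bijective ord hord_bij _ _ (fun i => rfl)
    rw [this]; exact hsum ξ hξ
  by_cases hcase : N ≤ s
  · -- few atoms: cover all of ι
    refine ⟨fun i => ord ⟨min i (N-1), by omega⟩, fun ξ hξ => ?_⟩
    -- some atom has G ≤ v
    have hex : ∃ i : Fin N, G (ord i) ξ ≤ v := by
      by_contra hcon
      push_neg at hcon
      have : ∑ i, μ i * G (ord i) ξ > v := by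
        have h1 : ∀ i : Fin N, μ i * v ≤ μ i * G (ord i) ξ :=
          fun i => mul_le_mul_of_nonneg_left (hcon i).le (hμ0 i)
        -- strict somewhere with positive weight
        obtain ⟨i0, hi0⟩ : ∃ i : Fin N, 0 < μ i := by
          by_contra hc
          push_neg at hc
          have : ∑ i, μ i ≤ 0 := Finset.sum_nonpos (fun i _ => hc i)
          rw [hμsum] at this; linarith
        have h2 : μ i0 * v < μ i0 * G (ord i0) ξ :=
          mul_lt_mul_of_pos_left (hcon i0) hi0
        have h3 : ∑ i, μ i * v < ∑ i, μ i * G (ord i) ξ :=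
          Finset.sum_lt_sum (fun i _ => h1 i) ⟨i0, Finset.mem_univ i0, h2⟩
        have h4 : ∑ i, μ i * v = v := by rw [← Finset.sum_mul, hμsum, one_mul]
        linarith
      exact absurd (hsum' ξ hξ) (not_le.2 this)
    obtain ⟨i0, hi0⟩ := hex
    refine ⟨⟨i0, by omega⟩, ?_⟩
    have : (⟨min (i0:ℕ) (N-1), by omega⟩ : Fin N) = i0 := by
      apply Fin.ext; simp; omega
    simp only [this]
    nlinarith
  · -- s < N
    push_neg at hcase
    refine ⟨fun i => ord ⟨i, by omega⟩, fun ξ hξ => ?_⟩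
    -- the minimizing index among the first s
    obtain ⟨i0, _, hi0min⟩ := Finset.exists_min_image (Finset.univ : Finset (Fin s))
      (fun i => G (ord ⟨i, by omega⟩) ξ) ⟨⟨0, hs⟩, Finset.mem_univ _⟩
    set M := G (ord ⟨i0, by omega⟩) ξ with hM
    refine ⟨i0, ?_⟩
    -- tail weight bound
    have htail : ∑ i ∈ Finset.univ.filter (fun i : Fin N => ¬ (i:ℕ) < s), μ i
        ≤ Real.log K - Real.log s := by
      have h1 : ∑ i ∈ Finset.univ.filter (fun i : Fin N => ¬ (i:ℕ) < s), μ i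
          ≤ ∑ i ∈ Finset.univ.filter (fun i : Fin N => ¬ (i:ℕ) < s), 1 / ((i:ℕ) + 1 : ℝ) :=
        Finset.sum_le_sum (fun i _ => hμ_bound i)
      have h2 : ∑ i ∈ Finset.univ.filter (fun i : Fin N => ¬ (i:ℕ) < s), 1 / ((i:ℕ) + 1 : ℝ)
          = ∑ i ∈ Finset.Ico s N, (1:ℝ)/(i+1) := by
        refine Finset.sum_bij' (fun (i : Fin N) _ => (i:ℕ))
          (fun (a : ℕ) ha => (⟨a, (Finset.mem_Ico.1 ha).2⟩ : Fin N)) ?_ ?_ ?_ ?_ ?_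
        · intro a ha
          simp only [Finset.mem_filter, Finset.mem_univ, true_and, not_lt] at ha
          exact Finset.mem_Ico.2 ⟨ha, a.2⟩
        · intro a ha
          simp only [Finset.mem_filter, Finset.mem_univ, true_and, not_lt]
          exact (Finset.mem_Ico.1 ha).1
        · intro a ha; exact Fin.ext rfl
        · intro a ha; rfl
        · intro a ha; rfl
      have h3 := harm_le_log s hs N hcase.le
      have h4 : Real.log N ≤ Real.log K := by
        refine Real.log_le_log (by positivity) ?_
        exact_mod_cast hcard
      rw [h2] at h1
      linarith
    -- split the weighted sum
    have hsplit := Finset.sum_filter_add_sum_filter_not Finset.univ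
      (fun i : Fin N => (i:ℕ) < s) (fun i => μ i * G (ord i) ξ)
    have hμsplit := Finset.sum_filter_add_sum_filter_not Finset.univ
      (fun i : Fin N => (i:ℕ) < s) μ
    have hlo : ∑ i ∈ Finset.univ.filter (fun i : Fin N => (i:ℕ) < s), μ i * M
        ≤ ∑ i ∈ Finset.univ.filter (fun i : Fin N => (i:ℕ) < s), μ i * G (ord i) ξ := by
      refine Finset.sum_le_sum (fun i hi => ?_)
      have hi' : (i:ℕ) < s := (Finset.mem_filter.1 hi).2
      have := hi0min ⟨(i:ℕ), hi'⟩ (Finset.mem_univ _)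
      have hii : (⟨((⟨(i:ℕ), hi'⟩ : Fin s) : ℕ), by omega⟩ : Fin N) = i := Fin.ext rfl
      rw [hii] at this
      exact mul_le_mul_of_nonneg_left this (hμ0 i)
    have hhi : ∑ i ∈ Finset.univ.filter (fun i : Fin N => ¬ (i:ℕ) < s), μ i * (M - Dc)
        ≤ ∑ i ∈ Finset.univ.filter (fun i : Fin N => ¬ (i:ℕ) < s), μ i * G (ord i) ξ := by
      refine Finset.sum_le_sum (fun i hi => ?_)
      have := hpair (ord ⟨i0, by omega⟩) (ord i) ξ hξ
      have hMi : M - Dc ≤ G (ord i) ξ := by rw [hM]; linarith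
      exact mul_le_mul_of_nonneg_left hMi (hμ0 i)
    have e1 : ∑ i ∈ Finset.univ.filter (fun i : Fin N => (i:ℕ) < s), μ i * M
        = (∑ i ∈ Finset.univ.filter (fun i : Fin N => (i:ℕ) < s), μ i) * M := by
      rw [Finset.sum_mul]
    have e2 : ∑ i ∈ Finset.univ.filter (fun i : Fin N => ¬ (i:ℕ) < s), μ i * (M - Dc)
        = (∑ i ∈ Finset.univ.filter (fun i : Fin N => ¬ (i:ℕ) < s), μ i) * (M - Dc) := by
      rw [Finset.sum_mul]
    have hv := hsum' ξ hξ
    have hTnn : 0 ≤ ∑ i ∈ Finset.univ.filter (fun i : Fin N => ¬ (i:ℕ) < s), μ i :=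
      Finset.sum_nonneg (fun i _ => hμ0 i)
    rw [hμsum] at hμsplit
    have hDb := mul_le_mul_of_nonneg_left htail hDc
    show M ≤ v + Dc * (Real.log K - Real.log s)
    set a := ∑ i ∈ Finset.univ.filter (fun i : Fin N => (i:ℕ) < s), μ i with ha
    set b := ∑ i ∈ Finset.univ.filter (fun i : Fin N => ¬ (i:ℕ) < s), μ i with hb
    have key : a * M + b * (M - Dc) ≤ v := by
      rw [← e1, ← e2]; linarith [hlo, hhi, hsplit, hv]
    have hab : a = 1 - b := by linarith [hμsplit]
    rw [hab] at key
    nlinarith [key, hDb]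

lemma region_lemma {nξ : ℕ} {Ey : Type*} (K s : ℕ) (hs1 : 1 ≤ s) (hsK : s ≤ K)
    (hK : K = nξ + 1)
    {C : Set (Fin nξ → ℝ)} (hCconv : Convex ℝ C)
    {S : Set Ey} (hSfin : S.Finite) (hSne : S.Nonempty)
    {G : Ey → (Fin nξ → ℝ) → ℝ} (hGconc : ∀ y ∈ S, ConcaveOn ℝ C (G y))
    {w ε Dc : ℝ} (hε : 0 < ε) (hDc : 0 ≤ Dc)
    (hmin : ∀ ξ ∈ C, ∃ y ∈ S, G y ξ ≤ w)
    (hpair : ∀ y ∈ S, ∀ y' ∈ S, ∀ ξ ∈ C, G y ξ - G y' ξ ≤ Dc) :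
    ∃ yy : Fin s → Ey, (∀ i, yy i ∈ S) ∧
      ∀ ξ ∈ C, ∃ i, G (yy i) ξ ≤ w + ε + Dc * (Real.log K - Real.log s) := by
  classical
  by_cases hCne : C.Nonempty
  · -- Helly: reduce to at most nξ+1 responses
    set SF : Finset Ey := hSfin.toFinset with hSF
    have hSFmem : ∀ y, y ∈ SF ↔ y ∈ S := fun y => Set.Finite.mem_toFinset hSfin
    set F : Ey → Set (Fin nξ → ℝ) := fun y => {ξ ∈ C | w + ε ≤ G y ξ} with hF
    have h_convex : ∀ y ∈ SF, Convex ℝ (F y) := fun y hy =>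
      (hGconc y ((hSFmem y).1 hy)).convex_ge (w + ε)
    have h_empty : ¬ (⋂ y ∈ SF, F y).Nonempty := by
      rintro ⟨ξ, hξ⟩
      obtain ⟨y₀, hy₀⟩ := hSne
      have hy₀' : y₀ ∈ SF := (hSFmem y₀).2 hy₀
      have hξ' := Set.mem_iInter₂.1 hξ
      have hξC : ξ ∈ C := (hξ' y₀ hy₀').1
      obtain ⟨y, hyS, hyle⟩ := hmin ξ hξC
      have := (hξ' y ((hSFmem y).2 hyS)).2
      linarith
    have hfinrank : Module.finrank ℝ (Fin nξ → ℝ) = nξ := Module.finrank_fin_fun ℝ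
    have hHelly : ¬ (∀ I ⊆ SF, I.card ≤ Module.finrank ℝ (Fin nξ → ℝ) + 1 →
        (⋂ y ∈ I, F y).Nonempty) := by
      intro hall
      exact h_empty (Convex.helly_theorem' h_convex hall)
    push_neg at hHelly
    obtain ⟨I, hIsub, hIcard, hIempty⟩ := hHelly
    have hIcard' : I.card ≤ K := by rw [hfinrank] at hIcard; omega
    have hIne : I.Nonempty := by
      by_contra hc
      rw [Finset.not_nonempty_iff_eq_empty] at hc
      obtain ⟨ξ₀, hξ₀⟩ := hCne
      have : ξ₀ ∈ ⋂ y ∈ I, F y := by simp [hc]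
      rw [hIempty] at this
      exact this
    have hIC : ∀ ξ ∈ C, ∃ y ∈ I, G y ξ ≤ w + ε := by
      intro ξ hξ
      by_contra hc
      push_neg at hc
      have : ξ ∈ ⋂ y ∈ I, F y := Set.mem_iInter₂.2 fun y hy => ⟨hξ, (hc y hy).le⟩
      rw [hIempty] at this
      exact this
    -- minimax on the subfamily I
    haveI : Nonempty {y : Ey // y ∈ I} := ⟨⟨hIne.choose, hIne.choose_spec⟩⟩
    have hGconcI : ∀ y : {y : Ey // y ∈ I}, ConcaveOn ℝ C (G y.1) := fun y =>
      hGconc y.1 ((hSFmem y.1).1 (hIsub y.2))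
    have hvI : ∀ ξ ∈ C, ∃ y : {y : Ey // y ∈ I}, G y.1 ξ ≤ w + ε := by
      intro ξ hξ
      obtain ⟨y, hy, hle⟩ := hIC ξ hξ
      exact ⟨⟨y, hy⟩, hle⟩
    obtain ⟨lam, hlam0, hlam1, hlamsum⟩ :=
      minimax_lemma (G := fun (y : {y : Ey // y ∈ I}) => G y.1) hCconv hCne hGconcI hvI
    have hcardI : Fintype.card {y : Ey // y ∈ I} ≤ K := by
      rw [Fintype.card_coe]; exact hIcard'
    obtain ⟨yy, hyy⟩ := select_lemma K s hs1 hsK hcardI lam hlam0 hlam1 hDc hlamsum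
      (fun y y' ξ hξ => hpair y.1 ((hSFmem y.1).1 (hIsub y.2)) y'.1
        ((hSFmem y'.1).1 (hIsub y'.2)) ξ hξ)
    refine ⟨fun i => (yy i).1, fun i => (hSFmem _).1 (hIsub (yy i).2), fun ξ hξ => ?_⟩
    obtain ⟨i, hi⟩ := hyy ξ hξ
    exact ⟨i, by linarith⟩
  · obtain ⟨y₀, hy₀⟩ := hSne
    refine ⟨fun _ => y₀, fun _ => hy₀, fun ξ hξ => absurd ⟨ξ, hξ⟩ hCne⟩

/-- If `g` is `L`-Lipschitz in `y`, the uncertainty set is covered for every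
`x ∈ X` by the closures of `R` convex recourse-stable regions, and some `x ∈ X` is feasible,
then for every integer `1 ≤ s ≤ n_ξ + 1` one has
`opt(R·s) − opt(2RO-C) ≤ L · diam(Y) · ln((n_ξ+1)/s)`. -/
theorem stmt_13 (nx ny nξ m : ℕ) (hnx : 0 < nx) (hny : 0 < ny) (hnξ : 0 < nξ) (hm0 : 0 < m)
    (X : Set (Fin nx → ℝ)) (hXcomp : IsCompact X) (hXne : X.Nonempty)
    (Y : Set (EuclideanSpace ℝ (Fin ny))) (hYfin : Y.Finite) (hYne : Y.Nonempty)
    (hYint : ∀ y ∈ Y, ∀ i, ∃ z : ℤ, y i = (z : ℝ))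
    (Yx : (Fin nx → ℝ) → Set (EuclideanSpace ℝ (Fin ny)))
    (hYxsub : ∀ x ∈ X, Yx x ⊆ Y) (hYxne : ∀ x ∈ X, (Yx x).Nonempty)
    (U : Set (Fin nξ → ℝ)) (hUcomp : IsCompact U) (hUconv : Convex ℝ U) (hUne : U.Nonempty)
    (g : (Fin nx → ℝ) → EuclideanSpace ℝ (Fin ny) → (Fin nξ → ℝ) → ℝ)
    (hgcont : Continuous fun p : (Fin nx → ℝ) × EuclideanSpace ℝ (Fin ny) × (Fin nξ → ℝ) =>
      g p.1 p.2.1 p.2.2)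
    (hgconc : ∀ x ∈ X, ∀ y ∈ Y, ConcaveOn ℝ U (g x y))
    (L : ℝ) (hL : 0 < L)
    (hlip : ∀ x ∈ X, ∀ ξ ∈ U, ∀ y ∈ Y, ∀ y' ∈ Y, |g x y ξ - g x y' ξ| ≤ L * ‖y - y'‖)
    (A : (Fin nξ → ℝ) →ᵃ[ℝ] Matrix (Fin m) (Fin nx) ℝ)
    (B : (Fin nξ → ℝ) →ᵃ[ℝ] Matrix (Fin m) (Fin ny) ℝ)
    (hm : (Fin nξ → ℝ) →ᵃ[ℝ] (Fin m → ℝ))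
    (hfeas : ∃ x ∈ X, ∀ ξ ∈ U, ∃ y ∈ Yx x, Feas A B hm x y ξ)
    (R : ℕ) (hR : 0 < R)
    (hRS : ∀ x ∈ X, ∃ D : Fin R → Set (Fin nξ → ℝ),
      (∀ t, D t ⊆ U ∧ Convex ℝ (D t) ∧ RecourseStable A B hm Yx x (D t)) ∧
      (⋃ t, closure (D t)) = U) :
    ∀ s : ℕ, 1 ≤ s → s ≤ nξ + 1 →
      (⨅ x ∈ X, kValE U (Yx x) (fE g A B hm x) (R * s)) ≤
        (⨅ x ∈ X, worstValE U (Yx x) (fE g A B hm x)) +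
        ((L * Metric.diam Y * Real.log (((nξ : ℝ) + 1) / (s : ℝ)) : ℝ) : EReal) := by
  classical
  intro s hs1 hsK
  set K : ℕ := nξ + 1 with hK
  set Dc : ℝ := L * Metric.diam Y with hDc
  have hDc0 : 0 ≤ Dc := mul_nonneg hL.le Metric.diam_nonneg
  set c : ℝ := L * Metric.diam Y * Real.log (((nξ : ℝ) + 1) / (s : ℝ)) with hc
  have hs0 : (0:ℝ) < (s:ℝ) := by exact_mod_cast hs1
  have hlogdiv : Real.log (((nξ : ℝ) + 1) / (s : ℝ)) = Real.log K - Real.log s := by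
    rw [Real.log_div (by positivity) (ne_of_gt hs0)]
    congr 2
    push_cast [hK]; ring
  have hceq : c = Dc * (Real.log K - Real.log s) := by rw [hc, hDc, hlogdiv]
  -- pairwise bound
  have hpairY : ∀ x ∈ X, ∀ y ∈ Y, ∀ y' ∈ Y, ∀ ξ ∈ U, g x y ξ - g x y' ξ ≤ Dc := by
    intro x hx y hy y' hy' ξ hξ
    have h1 := hlip x hx ξ hξ y hy y' hy'
    have h2 : ‖y - y'‖ ≤ Metric.diam Y := by
      rw [← dist_eq_norm]
      exact Metric.dist_le_diam_of_mem hYfin.isBounded hy hy'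
    have h3 : L * ‖y - y'‖ ≤ Dc := by
      rw [hDc]; exact mul_le_mul_of_nonneg_left h2 hL.le
    calc g x y ξ - g x y' ξ ≤ |g x y ξ - g x y' ξ| := le_abs_self _
      _ ≤ L * ‖y - y'‖ := h1
      _ ≤ Dc := h3
  -- continuity of g in ξ
  have hgξ : ∀ x y, Continuous (fun ξ => g x y ξ) := by
    intro x y
    have : Continuous (fun ξ : Fin nξ → ℝ =>
        ((x, (y, ξ)) : (Fin nx → ℝ) × EuclideanSpace ℝ (Fin ny) × (Fin nξ → ℝ))) :=
      continuous_const.prodMk (continuous_const.prodMk continuous_id)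
    exact hgcont.comp this
  -- closedness of feasibility sets
  have hfeas_closed : ∀ x y, IsClosed {ξ : Fin nξ → ℝ | Feas A B hm x y ξ} := by
    intro x y
    have heq : {ξ : Fin nξ → ℝ | Feas A B hm x y ξ}
        = ⋂ l, {ξ : Fin nξ → ℝ |
            hm ξ l ≤ (∑ j, A ξ l j * x j) + ∑ j, B ξ l j * y j} := by
      ext ξ; simp [Feas, Set.mem_iInter]
    rw [heq]
    refine isClosed_iInter fun l => isClosed_le ?_ ?_
    · exact (continuous_apply l).comp hm.continuous_of_finiteDimensional
    · apply Continuous.add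
      · apply continuous_finset_sum
        intro j _
        exact ((((Matrix.entryLinearMap ℝ ℝ l j).toAffineMap).comp
          A).continuous_of_finiteDimensional).mul continuous_const
      · apply continuous_finset_sum
        intro j _
        exact ((((Matrix.entryLinearMap ℝ ℝ l j).toAffineMap).comp
          B).continuous_of_finiteDimensional).mul continuous_const
  -- pointwise bound
  have hpoint : ∀ x ∈ X, kValE U (Yx x) (fE g A B hm x) (R * s) ≤
      worstValE U (Yx x) (fE g A B hm x) + (c : EReal) := by
    intro x hx
    by_cases htop : worstValE U (Yx x) (fE g A B hm x) = ⊤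
    · rw [htop, EReal.top_add_coe]; exact le_top
    -- the worst-case value is real
    have hYxfin : (Yx x).Finite := hYfin.subset (hYxsub x hx)
    have hYxne' := hYxne x hx
    have hbot : worstValE U (Yx x) (fE g A B hm x) ≠ ⊥ := by
      obtain ⟨ξ₀, hξ₀⟩ := hUne
      have hinf_mem : sInf ((fun y => fE g A B hm x y ξ₀) '' (Yx x)) ∈
          ((fun y => fE g A B hm x y ξ₀) '' (Yx x)) :=
        Set.Nonempty.csInf_mem (hYxne'.image _) (hYxfin.image _)
      obtain ⟨y₁, hy₁, hy₁eq⟩ := hinf_mem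
      have hy₁eq' : fE g A B hm x y₁ ξ₀ = sInf ((fun y => fE g A B hm x y ξ₀) '' (Yx x)) :=
        hy₁eq
      have h1 : (⨅ y ∈ Yx x, fE g A B hm x y ξ₀) = fE g A B hm x y₁ ξ₀ := by
        rw [hy₁eq', sInf_image]
      have h2 : (⨅ y ∈ Yx x, fE g A B hm x y ξ₀) ≤ worstValE U (Yx x) (fE g A B hm x) :=
        le_iSup₂ (f := fun ξ _ => ⨅ y ∈ Yx x, fE g A B hm x y ξ) ξ₀ hξ₀
      intro hbot'
      rw [hbot'] at h2
      have h3 : fE g A B hm x y₁ ξ₀ = ⊥ := by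
        rw [← h1]; exact le_bot_iff.1 h2
      unfold fE at h3
      split at h3
      · exact EReal.coe_ne_bot _ h3
      · exact (by simp : (⊤:EReal) ≠ ⊥) h3
    set w : ℝ := (worstValE U (Yx x) (fE g A B hm x)).toReal with hw
    have hwcoe : (w : EReal) = worstValE U (Yx x) (fE g A B hm x) :=
      EReal.coe_toReal htop hbot
    -- bound with ε slack
    have hmain : ∀ ε : ℝ, 0 < ε →
        kValE U (Yx x) (fE g A B hm x) (R * s) ≤ ((w + c + ε : ℝ) : EReal) := by
      intro ε hε
      obtain ⟨D, hD, hDcover⟩ := hRS x hx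
      obtain ⟨y₀, hy₀⟩ := hYxne x hx
      -- per-region choice
      have claim : ∀ t : Fin R, ∃ yy : Fin s → EuclideanSpace ℝ (Fin ny),
          (∀ i, yy i ∈ Yx x) ∧ ∀ ξ ∈ closure (D t), ∃ i,
            Feas A B hm x (yy i) ξ ∧ g x (yy i) ξ ≤ w + ε + Dc * (Real.log K - Real.log s) := by
        intro t
        by_cases hDt : (D t).Nonempty
        · set St : Set (EuclideanSpace ℝ (Fin ny)) :=
            {y | y ∈ Yx x ∧ ∀ ξ ∈ D t, Feas A B hm x y ξ} with hSt
          have hStYx : St ⊆ Yx x := fun y hy => hy.1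
          -- min over St is ≤ w on D t
          have hminD : ∀ ξ ∈ D t, ∃ y ∈ St, g x y ξ ≤ w := by
            intro ξ hξ
            have hξU : ξ ∈ U := (hD t).1 hξ
            have hle : (⨅ y ∈ Yx x, fE g A B hm x y ξ) ≤ (w : EReal) := by
              rw [hwcoe]
              exact le_iSup₂ (f := fun ξ _ => ⨅ y ∈ Yx x, fE g A B hm x y ξ) ξ hξU
            have hinf_mem : sInf ((fun y => fE g A B hm x y ξ) '' (Yx x)) ∈
                ((fun y => fE g A B hm x y ξ) '' (Yx x)) :=
              Set.Nonempty.csInf_mem (hYxne'.image _) (hYxfin.image _)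
            obtain ⟨y₁, hy₁, hy₁eq⟩ := hinf_mem
            have hy₁eq' : fE g A B hm x y₁ ξ = sInf ((fun y => fE g A B hm x y ξ) '' (Yx x)) :=
              hy₁eq
            have h1 : fE g A B hm x y₁ ξ ≤ (w : EReal) := by
              rw [hy₁eq', sInf_image]; exact hle
            have hFeas : Feas A B hm x y₁ ξ := by
              by_contra hc'
              rw [fE, if_neg hc'] at h1
              exact absurd (top_le_iff.1 h1) (EReal.coe_ne_top w)
            have hgle : g x y₁ ξ ≤ w := by
              rw [fE, if_pos hFeas] at h1
              exact EReal.coe_le_coe_iff.1 h1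
            rcases (hD t).2.2 y₁ hy₁ with hall | hnone
            · exact ⟨y₁, ⟨hy₁, hall⟩, hgle⟩
            · exact absurd hFeas (hnone ξ hξ)
          have hStne : St.Nonempty := by
            obtain ⟨ξt, hξt⟩ := hDt
            obtain ⟨y, hy, _⟩ := hminD ξt hξt
            exact ⟨y, hy⟩
          have hStfin : St.Finite := hYxfin.subset hStYx
          have hCsubU : closure (D t) ⊆ U := closure_minimal (hD t).1 hUcomp.isClosed
          have hCconv : Convex ℝ (closure (D t)) := (hD t).2.1.closure
          -- feasibility extends to the closure
          have hfeas_cl : ∀ y ∈ St, ∀ ξ ∈ closure (D t), Feas A B hm x y ξ := by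
            intro y hy ξ hξ
            exact closure_minimal (fun ξ' hξ' => hy.2 ξ' hξ') (hfeas_closed x y) hξ
          -- min ≤ w extends to the closure
          have hminC : ∀ ξ ∈ closure (D t), ∃ y ∈ St, g x y ξ ≤ w := by
            have hQclosed : IsClosed (⋃ y ∈ St, {ξ : Fin nξ → ℝ | g x y ξ ≤ w}) :=
              Set.Finite.isClosed_biUnion hStfin
                (fun y _ => isClosed_le (hgξ x y) continuous_const)
            have hsub : closure (D t) ⊆ ⋃ y ∈ St, {ξ : Fin nξ → ℝ | g x y ξ ≤ w} := by
              apply closure_minimal _ hQclosed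
              intro ξ hξ
              obtain ⟨y, hy, hle⟩ := hminD ξ hξ
              exact Set.mem_biUnion hy hle
            intro ξ hξ
            obtain ⟨y, hy, hle⟩ := Set.mem_iUnion₂.1 (hsub hξ)
            exact ⟨y, hy, hle⟩
          have hGconc' : ∀ y ∈ St, ConcaveOn ℝ (closure (D t)) (g x y) := fun y hy =>
            (hgconc x hx y (hYxsub x hx (hStYx hy))).subset hCsubU hCconv
          have hpair' : ∀ y ∈ St, ∀ y' ∈ St, ∀ ξ ∈ closure (D t),
              g x y ξ - g x y' ξ ≤ Dc := fun y hy y' hy' ξ hξ =>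
            hpairY x hx y (hYxsub x hx (hStYx hy)) y' (hYxsub x hx (hStYx hy'))
              ξ (hCsubU hξ)
          obtain ⟨yy, hyymem, hyyB⟩ := region_lemma K s hs1 hsK rfl hCconv hStfin hStne
            hGconc' hε hDc0 hminC hpair'
          refine ⟨yy, fun i => hStYx (hyymem i), fun ξ hξ => ?_⟩
          obtain ⟨i, hi⟩ := hyyB ξ hξ
          exact ⟨i, hfeas_cl _ (hyymem i) ξ hξ, hi⟩
        · refine ⟨fun _ => y₀, fun _ => hy₀, fun ξ hξ => ?_⟩
          rw [Set.not_nonempty_iff_eq_empty.1 hDt, closure_empty] at hξ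
          exact absurd hξ (Set.notMem_empty ξ)
      choose yy hyymem hyyB using claim
      -- assemble the policy
      set Yh : Fin (R * s) → EuclideanSpace ℝ (Fin ny) :=
        fun k => yy (finProdFinEquiv.symm k).1 (finProdFinEquiv.symm k).2 with hYh
      have hYhmem : Yh ∈ {y : Fin (R * s) → EuclideanSpace ℝ (Fin ny) | ∀ i, y i ∈ Yx x} :=
        fun i => hyymem _ _
      have step1 : kValE U (Yx x) (fE g A B hm x) (R * s)
          ≤ worstValE U (Set.range Yh) (fE g A B hm x) :=
        iInf₂_le Yh hYhmem
      have step2 : worstValE U (Set.range Yh) (fE g A B hm x)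
          ≤ ((w + ε + Dc * (Real.log K - Real.log s) : ℝ) : EReal) := by
        apply iSup₂_le
        intro ξ hξ
        have : ξ ∈ ⋃ t, closure (D t) := by rw [hDcover]; exact hξ
        obtain ⟨t, hξt⟩ := Set.mem_iUnion.1 this
        obtain ⟨i, hFeas, hgle⟩ := hyyB t ξ hξt
        have hmem : yy t i ∈ Set.range Yh := by
          refine ⟨finProdFinEquiv (t, i), ?_⟩
          rw [hYh]; simp
        have h1 : (⨅ y ∈ Set.range Yh, fE g A B hm x y ξ) ≤ fE g A B hm x (yy t i) ξ :=
          iInf₂_le _ hmem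
        have h2 : fE g A B hm x (yy t i) ξ
            = ((g x (yy t i) ξ : ℝ) : EReal) := by rw [fE, if_pos hFeas]
        calc (⨅ y ∈ Set.range Yh, fE g A B hm x y ξ)
            ≤ ((g x (yy t i) ξ : ℝ) : EReal) := by rw [← h2]; exact h1
          _ ≤ ((w + ε + Dc * (Real.log K - Real.log s) : ℝ) : EReal) :=
            EReal.coe_le_coe_iff.2 hgle
      have heqr : (w + ε + Dc * (Real.log K - Real.log s) : ℝ) = (w + c + ε : ℝ) := by
        rw [hceq]; ring
      rw [heqr] at step2
      exact le_trans step1 step2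
    -- remove the ε
    have hfinal : kValE U (Yx x) (fE g A B hm x) (R * s) ≤ ((w + c : ℝ) : EReal) := by
      set a := kValE U (Yx x) (fE g A B hm x) (R * s) with ha
      have hne_top : a ≠ ⊤ := by
        intro h
        have := hmain 1 one_pos
        rw [h] at this
        exact absurd (top_le_iff.1 this) (EReal.coe_ne_top _)
      by_cases hne_bot : a = ⊥
      · rw [hne_bot]; exact bot_le
      have hacoe : ((a.toReal : ℝ) : EReal) = a := EReal.coe_toReal hne_top hne_bot
      rw [← hacoe, EReal.coe_le_coe_iff]
      apply le_of_forall_pos_le_add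
      intro ε hε
      have := hmain ε hε
      rw [← hacoe, EReal.coe_le_coe_iff] at this
      linarith
    calc kValE U (Yx x) (fE g A B hm x) (R * s) ≤ ((w + c : ℝ) : EReal) := hfinal
      _ = (w : EReal) + (c : EReal) := by rw [EReal.coe_add]
      _ = worstValE U (Yx x) (fE g A B hm x) + (c : EReal) := by rw [hwcoe]
  -- assemble over x
  have hsub : (⨅ x ∈ X, kValE U (Yx x) (fE g A B hm x) (R * s)) - (c : EReal)
      ≤ ⨅ x ∈ X, worstValE U (Yx x) (fE g A B hm x) := by
    apply le_iInf₂
    intro x hx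
    rw [EReal.sub_le_iff_le_add (Or.inl (EReal.coe_ne_bot c)) (Or.inl (EReal.coe_ne_top c))]
    exact le_trans (iInf₂_le x hx) (hpoint x hx)
  rw [← EReal.sub_le_iff_le_add (Or.inl (EReal.coe_ne_bot c)) (Or.inl (EReal.coe_ne_top c))]
  exact hsub
end
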